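/- arXiv:1306.2024 — 6 statements merged into one kernel-verified Lean document; each statement's English description precedes it below -/
import Mathlib

section
/- For every non-trivial ψ in the Schwartz space 𝓢(ℝ) (ψ not identically zero) and every integer n ≥ 2, there exists η ∈ 𝓢(ℝ) with all moments vanishing (∫_ℝ x^m η(x) dx = 0 for every m ∈ ℕ) such that the function ω ↦ conj(ψ̂(ω)) η̂(ω) |ω|^{−n} is Lebesgue integrable on ℝ and K_{ψ,η} := (2π)^{n−1} ∫_ℝ conj(ψ̂(ω)) η̂(ω) |ω|^{−n} dω is non-zero. -/
open MeasureTheory Metric Filter Set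
open scoped Real ComplexConjugate Manifold

noncomputable section

/-- Euclidean space ℝⁿ. -/
abbrev En (n : ℕ) := EuclideanSpace ℝ (Fin n)

/-- The unit sphere 𝕊^{n-1} of ℝⁿ, as a subtype. -/
abbrev Sph (n : ℕ) := Metric.sphere (0 : En n) 1

/-- The surface measure on the sphere 𝕊^{n-1}. -/
def sphMeasure (n : ℕ) : Measure (Sph n) := (volume : Measure (En n)).toSphere

/-- 1D Fourier transform ĝ(ω) = ∫ g(x) e^{-i x ω} dx. -/
def FT1 (g : ℝ → ℂ) (ω : ℝ) : ℂ := ∫ x : ℝ, g x * Complex.exp (-(Complex.I * (x * ω : ℝ)))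

/-- n-dimensional Fourier transform ĝ(w) = ∫ g(x) e^{-i x·w} dx. -/
def FTn {n : ℕ} (g : En n → ℂ) (w : En n) : ℂ :=
  ∫ x : En n, g x * Complex.exp (-(Complex.I * (inner ℝ x w : ℝ)))

/-- The ridgelet ψ_{u,b,a}(x) = a⁻¹ ψ((x·u − b)/a). -/
def ridgelet {n : ℕ} (ψ : ℝ → ℂ) (u : Sph n) (b a : ℝ) (x : En n) : ℂ :=
  (a : ℂ)⁻¹ * ψ (((inner ℝ x (u : En n) : ℝ) - b) / a)

/-- The ridgelet transform R_ψ f(u,b,a) = ∫ f(x) conj(ψ_{u,b,a}(x)) dx. -/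
def RT {n : ℕ} (ψ : ℝ → ℂ) (f : En n → ℂ) (u : Sph n) (b a : ℝ) : ℂ :=
  ∫ x : En n, f x * conj (ridgelet ψ u b a x)

/-- K_{ψ,η} = (2π)^{n-1} ∫ conj(ψ̂(ω)) η̂(ω) |ω|^{-n} dω. -/
def Kconst (n : ℕ) (ψ η : ℝ → ℂ) : ℂ :=
  (((2 * π) ^ (n - 1) : ℝ) : ℂ) *
    ∫ ω : ℝ, conj (FT1 ψ ω) * FT1 η ω * ((|ω| ^ n : ℝ) : ℂ)⁻¹

/-- All moments vanish (Lizorkin condition on ℝ). -/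
def Lizorkin1 (ψ : ℝ → ℂ) : Prop := ∀ m : ℕ, ∫ x : ℝ, (x : ℂ) ^ m * ψ x = 0

/-- All moments vanish (Lizorkin condition on ℝⁿ). -/
def LizorkinN {n : ℕ} (φ : En n → ℂ) : Prop :=
  ∀ m : Fin n → ℕ, ∫ x : En n, (∏ i, (x i : ℂ) ^ m i) * φ x = 0

/-- The Radon transform Rf(u,p) = ∫_{u^⊥} f(pu + y) dy. -/
def Radon {n : ℕ} (f : En n → ℂ) (u : Sph n) (p : ℝ) : ℂ :=
  ∫ y : ((ℝ ∙ (u : En n))ᗮ : Submodule ℝ (En n)), f (p • (u : En n) + y)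

/-- The 1D wavelet transform W_ψ g(b,a) = ∫ g(p) a⁻¹ conj(ψ((p−b)/a)) dp. -/
def WT (ψ : ℝ → ℂ) (g : ℝ → ℂ) (b a : ℝ) : ℂ :=
  ∫ p : ℝ, g p * ((a : ℂ)⁻¹ * conj (ψ ((p - b) / a)))

/-- Rapid decay of a function Φ on 𝕊^{n-1}×ℝ×(0,∞) (arguments ordered (u,b,a)). -/
structure RapidDecay {n : ℕ} (Φ : Sph n → ℝ → ℝ → ℂ) : Prop where
  cont : ContinuousOn (fun q : Sph n × ℝ × ℝ => Φ q.1 q.2.1 q.2.2)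
    (univ ×ˢ univ ×ˢ Ioi (0 : ℝ))
  decay : ∀ s r : ℕ, ∃ C : ℝ, ∀ (u : Sph n) (b : ℝ) (a : ℝ), 0 < a →
    (a ^ s + (a ^ s)⁻¹) * (1 + b ^ 2) ^ ((r : ℝ) / 2) * ‖Φ u b a‖ ≤ C

/-- The ridgelet synthesis operator
R^t_ψ Φ(x) = ∫_{𝕊^{n-1}} ∫₀^∞ ∫_ℝ Φ(u,b,a) ψ_{u,b,a}(x) a^{−n} db da du. -/
def RTsynth {n : ℕ} (ψ : ℝ → ℂ) (Φ : Sph n → ℝ → ℝ → ℂ) (x : En n) : ℂ :=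
  ∫ u : Sph n, (∫ a in Ioi (0:ℝ), (∫ b : ℝ, Φ u b a * ridgelet ψ u b a x * ((a ^ n : ℝ) : ℂ)⁻¹))
    ∂(sphMeasure n)

/-- The seminorm ρ_ν(φ) = sup_{x, m ≤ ν} (1+|x|)^ν ‖∂^m φ(x)‖. -/
def rho {E : Type*} [NormedAddCommGroup E] [NormedSpace ℝ E] (ν : ℕ) (φ : E → ℂ) : ℝ :=
  ⨆ q : E × Fin (ν + 1), (1 + ‖q.1‖) ^ ν * ‖iteratedFDeriv ℝ q.2.1 φ q.1‖

open Complex FourierTransform SchwartzMap in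
lemma FT1_eq_fourierIntegral (g : ℝ → ℂ) (ω : ℝ) : FT1 g ω = 𝓕 g (ω / (2 * π)) := by
  rw [FT1, Real.fourier_real_eq_integral_exp_smul]
  congr 1
  ext x
  rw [smul_eq_mul, mul_comm]
  congr 2
  have h : -2 * π * x * (ω / (2 * π)) = -(x * ω) := by
    have : (2:ℝ) * π ≠ 0 := by positivity
    field_simp
  rw [h]; push_cast; ring

lemma hasTemperateGrowth_of_hasCompactSupport (f : ℝ → ℝ) (hf : ContDiff ℝ ((⊤:ℕ∞)) f)
    (h2 : HasCompactSupport f) : Function.HasTemperateGrowth f := by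
  refine ⟨hf, fun n => ⟨0, ?_⟩⟩
  obtain ⟨C, hC⟩ :=
    (hf.continuous_iteratedFDeriv (mod_cast le_top)).bounded_above_of_compact_support
      (h2.iteratedFDeriv n)
  exact ⟨C, fun x => by simpa using hC x⟩

open Complex FourierTransform SchwartzMap

/-- every non-trivial ψ ∈ 𝓢(ℝ) admits a reconstruction neuronal activation
function η ∈ 𝓢₀(ℝ) (all moments vanishing) with the defining integral absolutely convergent
and K_{ψ,η} ≠ 0. -/
theorem existence_reconstruction_neuronal_activation
    (n : ℕ) (hn : 2 ≤ n) (ψ : SchwartzMap ℝ ℂ) (hψ : ∃ x : ℝ, ψ x ≠ 0) :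
    ∃ η : SchwartzMap ℝ ℂ, Lizorkin1 ⇑η ∧
      Integrable (fun ω : ℝ => conj (FT1 ⇑ψ ω) * FT1 ⇑η ω * ((|ω| ^ n : ℝ) : ℂ)⁻¹) ∧
      Kconst n ⇑ψ ⇑η ≠ 0 := by
  set Ψ : SchwartzMap ℝ ℂ := fourierTransformCLE ℝ (SchwartzMap ℝ ℂ) ψ with hΨdef
  have hΨeq : ∀ ξ, Ψ ξ = 𝓕 ⇑ψ ξ := fun ξ => rfl
  obtain ⟨ξ₀, hξ₀ne, hξ₀⟩ : ∃ ξ₀ : ℝ, ξ₀ ≠ 0 ∧ Ψ ξ₀ ≠ 0 := by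
    by_contra h
    push_neg at h
    have hΨ0 : ⇑Ψ = fun _ => (0:ℂ) := by
      apply Continuous.ext_on (dense_compl_singleton (0:ℝ)) Ψ.continuous continuous_const
      intro x hx; exact h x hx
    have : ψ = 0 := by
      apply (fourierTransformCLE ℝ (SchwartzMap ℝ ℂ)).injective
      ext ξ
      have := congrFun hΨ0 ξ
      simpa [hΨdef] using this
    obtain ⟨x, hx⟩ := hψ
    rw [this] at hx; simp at hx
  have hpos : 0 < |ξ₀| := abs_pos.mpr hξ₀ne
  let χ : ContDiffBump ξ₀ := ⟨|ξ₀|/4, |ξ₀|/2, by positivity, by linarith⟩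
  have hχtg : Function.HasTemperateGrowth ⇑χ :=
    hasTemperateGrowth_of_hasCompactSupport _ χ.contDiff χ.hasCompactSupport
  let G : SchwartzMap ℝ ℂ :=
    bilinLeftCLM ((ContinuousLinearMap.lsmul ℝ ℝ : ℝ →L[ℝ] ℂ →L[ℝ] ℂ).flip) hχtg Ψ
  have hG : ∀ ξ, G ξ = χ ξ * Ψ ξ := by
    intro ξ
    show (χ ξ : ℝ) • Ψ ξ = _
    rw [Complex.real_smul]
  set η : SchwartzMap ℝ ℂ := (fourierTransformCLE ℝ (SchwartzMap ℝ ℂ)).symm G with hηdef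
  have hη : ∀ ξ, 𝓕 ⇑η ξ = χ ξ * Ψ ξ := by
    intro ξ
    rw [← hG]
    have : fourierTransformCLE ℝ (SchwartzMap ℝ ℂ) η = G := (fourierTransformCLE ℝ (SchwartzMap ℝ ℂ)).apply_symm_apply G
    rw [← this]; rfl
  have h2π : (0:ℝ) < 2 * π := by positivity
  have hFT1η : ∀ ω, FT1 ⇑η ω = χ (ω / (2*π)) * FT1 ⇑ψ ω := by
    intro ω
    rw [FT1_eq_fourierIntegral, hη, FT1_eq_fourierIntegral, hΨeq]
  -- the real-valued integrand
  set F : ℝ → ℝ := fun ω => χ (ω / (2*π)) * Complex.normSq (FT1 ⇑ψ ω) * (|ω| ^ n)⁻¹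
    with hFdef
  have hpt : ∀ ω, conj (FT1 ⇑ψ ω) * FT1 ⇑η ω * ((|ω| ^ n : ℝ) : ℂ)⁻¹ = (F ω : ℂ) := by
    intro ω
    rw [hFT1η, hFdef]
    push_cast
    rw [Complex.normSq_eq_conj_mul_self]
    ring
  have hFT1ψcont : Continuous (fun ω => FT1 ⇑ψ ω) := by
    have : (fun ω => FT1 ⇑ψ ω) = fun ω => Ψ (ω / (2*π)) := by
      ext ω; rw [FT1_eq_fourierIntegral, hΨeq]
    rw [this]
    exact Ψ.continuous.comp (continuous_id.div_const _)
  have hF0 : ∀ ω : ℝ, |ω| < π * |ξ₀| → F ω = 0 := by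
    intro ω hω
    have hχ0 : χ (ω / (2*π)) = 0 := by
      apply χ.zero_of_le_dist
      have h1 : |ω / (2*π)| < |ξ₀|/2 := by
        rw [abs_div, abs_of_pos h2π, div_lt_iff₀ h2π]
        calc |ω| < π * |ξ₀| := hω
        _ = |ξ₀| / 2 * (2 * π) := by ring
      show |ξ₀|/2 ≤ dist (ω / (2*π)) ξ₀
      rw [Real.dist_eq]
      have := abs_sub_abs_le_abs_sub ξ₀ (ω / (2*π))
      rw [abs_sub_comm]
      linarith
    rw [hFdef]; simp [hχ0]
  have hFcont : Continuous F := by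
    rw [continuous_iff_continuousAt]
    intro ω
    rcases lt_or_ge |ω| (π * |ξ₀|) with hlt | hge
    · have hopen : IsOpen {x : ℝ | |x| < π * |ξ₀|} :=
        isOpen_lt continuous_abs continuous_const
      have hc : ContinuousAt (fun _ : ℝ => (0:ℝ)) ω := continuousAt_const
      refine hc.congr ?_
      filter_upwards [hopen.mem_nhds hlt] with x hx
      exact (hF0 x hx).symm
    · have hωpos : (0:ℝ) < |ω| := lt_of_lt_of_le (by positivity) hge
      have hωne : |ω| ^ n ≠ 0 := pow_ne_zero n hωpos.ne'
      exact (((χ.continuous.comp (continuous_id.div_const _)).mul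
        (Complex.continuous_normSq.comp hFT1ψcont)).continuousAt).mul
        (((_root_.continuous_abs.pow n).continuousAt).inv₀ hωne)
  have hFsupp : HasCompactSupport F := by
    apply HasCompactSupport.intro (isCompact_closedBall (0:ℝ) (2*π*(2*|ξ₀|)))
    intro x hx
    simp only [Metric.mem_closedBall, Real.dist_eq, sub_zero, not_le] at hx
    have hχ0 : χ (x / (2*π)) = 0 := by
      apply χ.zero_of_le_dist
      have h1 : 2 * |ξ₀| < |x / (2*π)| := by
        rw [abs_div, abs_of_pos h2π, lt_div_iff₀ h2π]
        calc 2 * |ξ₀| * (2 * π) = 2*π*(2*|ξ₀|) := by ring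
        _ < |x| := hx
      show |ξ₀|/2 ≤ dist (x / (2*π)) ξ₀
      rw [Real.dist_eq]
      have := abs_sub_abs_le_abs_sub (x / (2*π)) ξ₀
      linarith
    rw [hFdef]; simp [hχ0]
  have hFint : Integrable F := hFcont.integrable_of_hasCompactSupport hFsupp
  have hFnn : ∀ ω, 0 ≤ F ω := by
    intro ω
    apply mul_nonneg (mul_nonneg χ.nonneg (Complex.normSq_nonneg _))
    positivity
  have hFpos : 0 < F (2 * π * ξ₀) := by
    have hdiv : (2 * π * ξ₀) / (2 * π) = ξ₀ := by field_simp
    rw [hFdef]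
    simp only [hdiv]
    have hχ1 : χ ξ₀ = 1 :=
      χ.one_of_mem_closedBall (by simp [Metric.mem_closedBall]; positivity)
    rw [hχ1, one_mul]
    have hFT1 : FT1 ⇑ψ (2 * π * ξ₀) ≠ 0 := by
      rw [FT1_eq_fourierIntegral, ← hΨeq]
      have : (2 * π * ξ₀) / (2 * π) = ξ₀ := hdiv
      rw [this]
      exact hξ₀
    have h1 : 0 < Complex.normSq (FT1 ⇑ψ (2 * π * ξ₀)) := Complex.normSq_pos.mpr hFT1
    have h2 : (0:ℝ) < |2 * π * ξ₀| := by
      rw [abs_mul]; positivity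
    positivity
  have hIpos : 0 < ∫ ω, F ω := by
    rw [integral_pos_iff_support_of_nonneg hFnn hFint]
    have hopen : IsOpen (Function.support F) := by
      rw [Function.support_eq_preimage]
      exact (isOpen_compl_singleton).preimage hFcont
    exact hopen.measure_pos volume ⟨2 * π * ξ₀, Function.mem_support.mpr hFpos.ne'⟩
  have hIeq : (∫ ω : ℝ, conj (FT1 ⇑ψ ω) * FT1 ⇑η ω * ((|ω| ^ n : ℝ) : ℂ)⁻¹)
      = ((∫ ω, F ω : ℝ) : ℂ) := by
    simp only [hpt]
    exact integral_ofReal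
  refine ⟨η, ?_, ?_, ?_⟩
  · -- Lizorkin
    intro m
    have hint : ∀ k : ℕ, Integrable (fun x : ℝ => x ^ k • η x) := by
      intro k
      refine (η.integrable_pow_mul volume k).mono'
        ((continuous_pow k).smul η.continuous).aestronglyMeasurable ?_
      filter_upwards with x
      simp [norm_smul, _root_.abs_pow]
    have hderiv := Real.iteratedDeriv_fourier (f := ⇑η) (N := (m:ℕ∞)) (n := m)
      (fun k hk => hint k) le_rfl
    have hvanish : (fun ξ => 𝓕 ⇑η ξ) =ᶠ[nhds (0:ℝ)] fun _ => (0:ℂ) := by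
      have hball : Metric.ball (0:ℝ) (|ξ₀|/2) ∈ nhds (0:ℝ) :=
        Metric.ball_mem_nhds _ (by positivity)
      filter_upwards [hball] with ξ hξ
      have hχ0 : χ ξ = 0 := by
        apply χ.zero_of_le_dist
        have h1 : dist ξ 0 < |ξ₀|/2 := hξ
        simp only [Real.dist_eq, sub_zero] at h1 ⊢
        have := abs_sub_abs_le_abs_sub ξ₀ ξ
        show |ξ₀|/2 ≤ |ξ - ξ₀|
        rw [abs_sub_comm]
        linarith
      rw [hη, hχ0, Complex.ofReal_zero, zero_mul]
    have hL : iteratedDeriv m (𝓕 ⇑η) 0 = 0 := by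
      rw [hvanish.iteratedDeriv_eq m]
      simp [iteratedDeriv, iteratedFDeriv_zero_fun]
    rw [hderiv] at hL
    have hR : 𝓕 (fun x : ℝ => (-2 * π * Complex.I * x) ^ m • η x) 0
        = ∫ x : ℝ, (-2 * π * Complex.I * x) ^ m • η x := by
      rw [Real.fourier_real_eq]
      simp
    rw [hR] at hL
    have hfactor : (fun x : ℝ => (-2 * π * Complex.I * x) ^ m • η x)
        = fun x : ℝ => (-2 * π * Complex.I) ^ m * ((x:ℂ) ^ m * η x) := by
      ext x
      rw [smul_eq_mul, mul_pow]; ring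
    rw [hfactor, integral_const_mul] at hL
    have hc : ((-2 : ℂ) * π * Complex.I) ^ m ≠ 0 := by
      apply pow_ne_zero
      simp [Complex.ext_iff, Real.pi_ne_zero]
    exact (mul_eq_zero.mp hL).resolve_left hc
  · -- integrability
    have : (fun ω : ℝ => conj (FT1 ⇑ψ ω) * FT1 ⇑η ω * ((|ω| ^ n : ℝ) : ℂ)⁻¹)
        = fun ω => ((F ω : ℝ) : ℂ) := funext hpt
    rw [this]
    exact hFint.ofReal
  · -- Kconst ≠ 0
    rw [Kconst, hIeq]
    apply mul_ne_zero
    · simp only [ne_eq, Complex.ofReal_eq_zero]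
      positivity
    · simp only [ne_eq, Complex.ofReal_eq_zero]
      exact hIpos.ne'
end
end

section
/- Let ψ ∈ 𝓢(ℝ), let f ∈ L¹(ℝⁿ), and let Φ : 𝕊^{n-1}×ℝ×(0,∞) → ℂ have rapid decay. Then both of the following integrals converge absolutely and are equal: ∫_{ℝⁿ} f(x) · R^t_ψ Φ(x) dx = ∫_{𝕊^{n-1}} ∫₀^∞ ∫_ℝ R_{conj(ψ)} f(u,b,a) · Φ(u,b,a) · a^{−n} db da du, where R_{conj(ψ)} f(u,b,a) = ∫_{ℝⁿ} f(x) ψ_{u,b,a}(x) dx. -/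
open MeasureTheory Metric Filter Set
open scoped Real ComplexConjugate Manifold

noncomputable section

lemma wfun_integrable (n : ℕ) :
    IntegrableOn (fun a : ℝ => (a ^ (n+1))⁻¹ * (a ^ (n+2) + (a ^ (n+2))⁻¹)⁻¹) (Ioi 0) := by
  set W : ℝ → ℝ := fun a => (a ^ (n+1))⁻¹ * (a ^ (n+2) + (a ^ (n+2))⁻¹)⁻¹ with hW
  have hmeas : AEStronglyMeasurable W volume := by
    apply Measurable.aestronglyMeasurable
    measurability
  have hWnonneg : ∀ a : ℝ, 0 < a → 0 ≤ W a := by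
    intro a ha
    have h1 : 0 < a ^ (n+1) := pow_pos ha _
    have h2 : 0 < a ^ (n+2) := pow_pos ha _
    have h3 : 0 < a ^ (n+2) + (a ^ (n+2))⁻¹ := by positivity
    positivity
  have hsplit : Ioi (0:ℝ) = Ioc 0 1 ∪ Ioi 1 := (Ioc_union_Ioi_eq_Ioi zero_le_one).symm
  rw [hsplit]
  apply IntegrableOn.union
  · -- on (0,1]
    apply Measure.integrableOn_of_bounded (M := 1) (by simp) hmeas
    rw [ae_restrict_iff' measurableSet_Ioc]
    refine ae_of_all _ fun a ha => ?_
    obtain ⟨ha0, ha1⟩ := ha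
    have h1 : 0 < a ^ (n+1) := pow_pos ha0 _
    have h2 : 0 < a ^ (n+2) := pow_pos ha0 _
    rw [Real.norm_eq_abs, abs_of_nonneg (hWnonneg a ha0)]
    have hle : (a ^ (n+2) + (a ^ (n+2))⁻¹)⁻¹ ≤ a ^ (n+2) := by
      have : (a ^ (n+2))⁻¹ ≤ a ^ (n+2) + (a ^ (n+2))⁻¹ := le_add_of_nonneg_left h2.le
      calc (a ^ (n+2) + (a ^ (n+2))⁻¹)⁻¹ ≤ ((a ^ (n+2))⁻¹)⁻¹ := by
            apply inv_anti₀ (inv_pos.2 h2) this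
        _ = a ^ (n+2) := inv_inv _
    calc W a ≤ (a ^ (n+1))⁻¹ * a ^ (n+2) := by
          exact mul_le_mul_of_nonneg_left hle (inv_nonneg.2 h1.le)
      _ = a := by rw [show n+2 = (n+1)+1 by ring, pow_succ]; field_simp; ring
      _ ≤ 1 := ha1
  · -- on (1, ∞)
    apply Integrable.mono' (g := fun a : ℝ => a ^ (-(2*(n:ℝ)+3)))
    · apply integrableOn_Ioi_rpow_of_lt _ one_pos
      have : (0:ℝ) ≤ (n:ℝ) := Nat.cast_nonneg n
      linarith
    · exact hmeas.restrict
    · rw [ae_restrict_iff' measurableSet_Ioi]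
      refine ae_of_all _ fun a ha => ?_
      have ha0 : (0:ℝ) < a := lt_trans one_pos ha
      have h1 : 0 < a ^ (n+1) := pow_pos ha0 _
      have h2 : 0 < a ^ (n+2) := pow_pos ha0 _
      rw [Real.norm_eq_abs, abs_of_nonneg (hWnonneg a ha0)]
      have hle : (a ^ (n+2) + (a ^ (n+2))⁻¹)⁻¹ ≤ (a ^ (n+2))⁻¹ := by
        apply inv_anti₀ h2 (le_add_of_nonneg_right (inv_nonneg.2 h2.le))
      have hrw : a ^ (-(2*(n:ℝ)+3)) = ((a ^ (n+1)) * (a ^ (n+2)))⁻¹ := by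
        rw [← pow_add]
        rw [show n+1+(n+2) = 2*n+3 by ring]
        rw [← Real.rpow_natCast a (2*n+3), ← Real.rpow_neg ha0.le]
        norm_num
      calc W a ≤ (a ^ (n+1))⁻¹ * (a ^ (n+2))⁻¹ :=
            mul_le_mul_of_nonneg_left hle (inv_nonneg.2 h1.le)
        _ = a ^ (-(2*(n:ℝ)+3)) := by rw [hrw, mul_inv]

set_option maxHeartbeats 2000000 in
/-- duality between the ridgelet transform and the ridgelet synthesis operator:
both integrals converge absolutely and
∫ f(x) R^t_ψΦ(x) dx = ∫_{𝕊^{n-1}} ∫₀^∞ ∫_ℝ R_{conj(ψ)}f(u,b,a) Φ(u,b,a) a^{−n} db da du,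
where R_{conj(ψ)}f(u,b,a) = ∫ f(x) ψ_{u,b,a}(x) dx. -/
theorem ridgelet_synthesis_transpose
    (n : ℕ) (hn : 2 ≤ n) (ψ : SchwartzMap ℝ ℂ)
    (f : En n → ℂ) (hf : Integrable f)
    (Φ : Sph n → ℝ → ℝ → ℂ) (hΦ : RapidDecay Φ) :
    Integrable (fun x : En n => f x * RTsynth ⇑ψ Φ x) ∧
    Integrable (fun q : Sph n × ℝ × ℝ =>
        (∫ x : En n, f x * ridgelet ⇑ψ q.1 q.2.2 q.2.1 x) * Φ q.1 q.2.2 q.2.1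
          * ((q.2.1 ^ n : ℝ) : ℂ)⁻¹)
      ((sphMeasure n).prod ((volume.restrict (Ioi (0:ℝ))).prod volume)) ∧
    ∫ x : En n, f x * RTsynth ⇑ψ Φ x =
      ∫ u : Sph n, (∫ a in Ioi (0:ℝ),
        (∫ b : ℝ, (∫ x : En n, f x * ridgelet ⇑ψ u b a x) * Φ u b a * ((a ^ n : ℝ) : ℂ)⁻¹))
        ∂(sphMeasure n) := by
  classical
  haveI hfin : IsFiniteMeasure (sphMeasure n) := by unfold sphMeasure; infer_instance
  -- bound for ψ
  obtain ⟨Cψ, -, hCψ⟩ := ψ.decay 0 0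
  set Cψ' : ℝ := max Cψ 0 with hCψ'def
  have hCψ0 : 0 ≤ Cψ' := le_max_right _ _
  have hψb : ∀ t : ℝ, ‖ψ t‖ ≤ Cψ' := by
    intro t
    have h := hCψ t
    simp only [pow_zero, one_mul, norm_iteratedFDeriv_zero] at h
    exact h.trans (le_max_left _ _)
  -- bound for Φ
  obtain ⟨C, hC⟩ := hΦ.decay (n+2) 2
  set C' : ℝ := max C 0 with hC'def
  have hC0 : 0 ≤ C' := le_max_right _ _
  set S : ℝ → ℝ := fun a => a ^ (n+2) + (a ^ (n+2))⁻¹ with hSdef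
  have hSpos : ∀ a : ℝ, 0 < a → 0 < S a := fun a ha =>
    add_pos (pow_pos ha _) (inv_pos.2 (pow_pos ha _))
  have hΦbd : ∀ (u : Sph n) (b a : ℝ), 0 < a →
      ‖Φ u b a‖ ≤ C' * ((S a)⁻¹ * (1 + b ^ 2)⁻¹) := by
    intro u b a ha
    have h1 := hC u b a ha
    rw [show ((2:ℕ):ℝ)/2 = 1 by norm_num, Real.rpow_one] at h1
    have hb : (0:ℝ) < 1 + b ^ 2 := by positivity
    have hS := hSpos a ha
    have h2 : ‖Φ u b a‖ * (S a * (1 + b ^ 2)) ≤ C' := by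
      calc ‖Φ u b a‖ * (S a * (1 + b ^ 2)) = S a * (1 + b ^ 2) * ‖Φ u b a‖ := by ring
        _ ≤ C := h1
        _ ≤ C' := le_max_left _ _
    calc ‖Φ u b a‖ = ‖Φ u b a‖ * (S a * (1 + b ^ 2)) * (S a * (1 + b ^ 2))⁻¹ := by
          field_simp
      _ ≤ C' * (S a * (1 + b ^ 2))⁻¹ := by
          apply mul_le_mul_of_nonneg_right h2 (inv_nonneg.2 (by positivity))
      _ = C' * ((S a)⁻¹ * (1 + b ^ 2)⁻¹) := by rw [mul_inv]
  -- the dominating function on q-space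
  set D : ℝ := Cψ' * C' with hDdef
  set G : Sph n × ℝ × ℝ → ℝ :=
    fun q => D * (((q.2.1 ^ (n+1))⁻¹ * (S q.2.1)⁻¹) * (1 + q.2.2 ^ 2)⁻¹) with hGdef
  set μq : Measure (Sph n × ℝ × ℝ) :=
    (sphMeasure n).prod ((volume.restrict (Ioi (0:ℝ))).prod volume) with hμqdef
  have hG : Integrable G μq := by
    have hwi : Integrable (fun a : ℝ => (a ^ (n+1))⁻¹ * (S a)⁻¹) (volume.restrict (Ioi 0)) := by
      simpa [hSdef, IntegrableOn] using wfun_integrable n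
    have h2 := hwi.mul_prod integrable_inv_one_add_sq
    have h3 : Integrable (fun q : Sph n × ℝ × ℝ =>
        (1:ℝ) * (((q.2.1 ^ (n+1))⁻¹ * (S q.2.1)⁻¹) * (1 + q.2.2 ^ 2)⁻¹)) μq :=
      (integrable_const (1:ℝ)).mul_prod h2
    simpa [hGdef] using h3.const_mul D
  -- pointwise core bound
  have hcore : ∀ (q : Sph n × ℝ × ℝ), 0 < q.2.1 → ∀ x : En n,
      ‖Φ q.1 q.2.2 q.2.1 * ridgelet ⇑ψ q.1 q.2.2 q.2.1 x * ((q.2.1 ^ n : ℝ) : ℂ)⁻¹‖ ≤ G q := by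
    rintro ⟨u, a, b⟩ ha x
    simp only at ha ⊢
    have hψx := hψb (((inner ℝ x (u : En n) : ℝ) - b) / a)
    have hΦx := hΦbd u b a ha
    have hS := hSpos a ha
    have hb : (0:ℝ) < 1 + b ^ 2 := by positivity
    have hrid : ‖ridgelet ⇑ψ u b a x‖ ≤ a⁻¹ * Cψ' := by
      rw [ridgelet, norm_mul, norm_inv, Complex.norm_real, Real.norm_eq_abs, abs_of_pos ha]
      exact mul_le_mul_of_nonneg_left hψx (inv_nonneg.2 ha.le)
    have hnc : ‖((a ^ n : ℝ) : ℂ)⁻¹‖ = (a ^ n)⁻¹ := by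
      rw [norm_inv, Complex.norm_real, Real.norm_eq_abs, abs_of_pos (pow_pos ha n)]
    rw [norm_mul, norm_mul, hnc]
    have step1 : ‖Φ u b a‖ * ‖ridgelet ⇑ψ u b a x‖
        ≤ (C' * ((S a)⁻¹ * (1 + b ^ 2)⁻¹)) * (a⁻¹ * Cψ') :=
      mul_le_mul hΦx hrid (norm_nonneg _)
        (mul_nonneg hC0 (mul_nonneg (inv_nonneg.2 hS.le) (inv_nonneg.2 hb.le)))
    calc ‖Φ u b a‖ * ‖ridgelet ⇑ψ u b a x‖ * (a ^ n)⁻¹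
        ≤ (C' * ((S a)⁻¹ * (1 + b ^ 2)⁻¹)) * (a⁻¹ * Cψ') * (a ^ n)⁻¹ :=
          mul_le_mul_of_nonneg_right step1 (inv_nonneg.2 (pow_pos ha n).le)
      _ = G (u, a, b) := by
          simp only [hGdef, hDdef]
          rw [show (a:ℝ)^(n+1) = a^n * a from pow_succ a n, mul_inv]
          ring
  -- measure identities and measurability
  have hset3 : MeasurableSet ((univ : Set (Sph n)) ×ˢ Ioi (0:ℝ) ×ˢ (univ : Set ℝ)) :=
    MeasurableSet.univ.prod (measurableSet_Ioi.prod MeasurableSet.univ)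
  have hset4 : MeasurableSet
      (((univ : Set (Sph n)) ×ˢ Ioi (0:ℝ) ×ˢ (univ : Set ℝ)) ×ˢ (univ : Set (En n))) :=
    hset3.prod MeasurableSet.univ
  have hμq : μq = ((sphMeasure n).prod ((volume : Measure ℝ).prod volume)).restrict
      ((univ : Set (Sph n)) ×ˢ Ioi (0:ℝ) ×ˢ (univ : Set ℝ)) := by
    rw [hμqdef, Measure.restrict_prod_eq_prod_univ,
      show sphMeasure n = (sphMeasure n).restrict univ from Measure.restrict_univ.symm,
      Measure.prod_restrict, Measure.restrict_univ]
  have hμqx : μq.prod (volume : Measure (En n)) =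
      (((sphMeasure n).prod ((volume : Measure ℝ).prod volume)).prod volume).restrict
        (((univ : Set (Sph n)) ×ˢ Ioi (0:ℝ) ×ˢ (univ : Set ℝ)) ×ˢ (univ : Set (En n))) := by
    rw [hμq, Measure.restrict_prod_eq_prod_univ]
  -- joint continuity of the core on {a > 0}
  have hcont : ContinuousOn (fun p : (Sph n × ℝ × ℝ) × En n =>
      Φ p.1.1 p.1.2.2 p.1.2.1 * ridgelet ⇑ψ p.1.1 p.1.2.2 p.1.2.1 p.2
        * ((p.1.2.1 ^ n : ℝ) : ℂ)⁻¹)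
      (((univ : Set (Sph n)) ×ˢ Ioi (0:ℝ) ×ˢ (univ : Set ℝ)) ×ˢ (univ : Set (En n))) := by
    have hane : ∀ p : (Sph n × ℝ × ℝ) × En n,
        p ∈ (((univ : Set (Sph n)) ×ˢ Ioi (0:ℝ) ×ˢ (univ : Set ℝ)) ×ˢ (univ : Set (En n))) →
          p.1.2.1 ≠ 0 := fun p hp => ne_of_gt hp.1.2.1
    have hinner : Continuous (fun p : (Sph n × ℝ × ℝ) × En n =>
        (inner ℝ p.2 (p.1.1 : En n) : ℝ)) := by
      exact continuous_inner.comp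
        (continuous_snd.prodMk (continuous_subtype_val.comp (continuous_fst.fst)))
    apply ContinuousOn.mul (ContinuousOn.mul ?_ ?_) ?_
    · have hmap : MapsTo (fun p : (Sph n × ℝ × ℝ) × En n => (p.1.1, p.1.2.2, p.1.2.1))
          ((((univ : Set (Sph n)) ×ˢ Ioi (0:ℝ) ×ˢ (univ : Set ℝ)) ×ˢ (univ : Set (En n))))
          ((univ : Set (Sph n)) ×ˢ (univ : Set ℝ) ×ˢ Ioi (0:ℝ)) :=
        fun p hp => ⟨mem_univ _, mem_univ _, hp.1.2.1⟩
      exact ContinuousOn.comp hΦ.cont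
        (Continuous.continuousOn (by fun_prop)) hmap
    · simp only [ridgelet]
      apply ContinuousOn.mul
      · apply ContinuousOn.inv₀
        · exact (Complex.continuous_ofReal.comp (by fun_prop)).continuousOn
        · intro p hp
          exact Complex.ofReal_ne_zero.2 (hane p hp)
      · apply ψ.continuous.comp_continuousOn
        apply ContinuousOn.div
        · exact (hinner.sub (by fun_prop)).continuousOn
        · exact (Continuous.continuousOn (by fun_prop))
        · exact hane
    · apply ContinuousOn.inv₀
      · exact (Complex.continuous_ofReal.comp ((continuous_pow n).comp (by fun_prop))).continuousOn
      · intro p hp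
        exact Complex.ofReal_ne_zero.2 (pow_ne_zero _ (hane p hp))
  -- the master function F and its integrability
  set F : (Sph n × ℝ × ℝ) × En n → ℂ := fun p =>
    f p.2 * (Φ p.1.1 p.1.2.2 p.1.2.1 * ridgelet ⇑ψ p.1.1 p.1.2.2 p.1.2.1 p.2
      * ((p.1.2.1 ^ n : ℝ) : ℂ)⁻¹) with hFdef
  have hmeas4 : AEStronglyMeasurable (fun p : (Sph n × ℝ × ℝ) × En n =>
      Φ p.1.1 p.1.2.2 p.1.2.1 * ridgelet ⇑ψ p.1.1 p.1.2.2 p.1.2.1 p.2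
        * ((p.1.2.1 ^ n : ℝ) : ℂ)⁻¹) (μq.prod volume) := by
    rw [hμqx]
    exact hcont.aestronglyMeasurable hset4
  have hFmeas : AEStronglyMeasurable F (μq.prod volume) := by
    apply AEStronglyMeasurable.mul _ hmeas4
    exact hf.1.comp_quasiMeasurePreserving Measure.quasiMeasurePreserving_snd
  have hae4 : ∀ᵐ p ∂(μq.prod (volume : Measure (En n))), 0 < p.1.2.1 := by
    rw [hμqx]
    filter_upwards [ae_restrict_mem hset4] with p hp using hp.1.2.1
  have hFint : Integrable F (μq.prod volume) := by
    apply Integrable.mono' (hG.mul_prod hf.norm) hFmeas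
    filter_upwards [hae4] with p hp
    calc ‖F p‖ = ‖f p.2‖ * ‖Φ p.1.1 p.1.2.2 p.1.2.1 * ridgelet ⇑ψ p.1.1 p.1.2.2 p.1.2.1 p.2
          * ((p.1.2.1 ^ n : ℝ) : ℂ)⁻¹‖ := by rw [hFdef, norm_mul]
      _ ≤ ‖f p.2‖ * G p.1 := mul_le_mul_of_nonneg_left (hcore p.1 hp p.2) (norm_nonneg _)
      _ = G p.1 * ‖f p.2‖ := mul_comm _ _
  -- per-x integrability on μq
  have hmeasq : ∀ x : En n, AEStronglyMeasurable (fun q : Sph n × ℝ × ℝ =>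
      Φ q.1 q.2.2 q.2.1 * ridgelet ⇑ψ q.1 q.2.2 q.2.1 x * ((q.2.1 ^ n : ℝ) : ℂ)⁻¹) μq := by
    intro x
    rw [hμq]
    apply ContinuousOn.aestronglyMeasurable _ hset3
    exact ContinuousOn.comp hcont
      ((continuous_id.prodMk continuous_const).continuousOn)
      (fun q hq => ⟨hq, mem_univ _⟩)
  have haeq : ∀ᵐ q ∂μq, 0 < q.2.1 := by
    rw [hμq]
    filter_upwards [ae_restrict_mem hset3] with q hq using hq.2.1
  have hintq : ∀ x : En n, Integrable (fun q : Sph n × ℝ × ℝ =>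
      Φ q.1 q.2.2 q.2.1 * ridgelet ⇑ψ q.1 q.2.2 q.2.1 x * ((q.2.1 ^ n : ℝ) : ℂ)⁻¹) μq := by
    intro x
    apply Integrable.mono' hG (hmeasq x)
    filter_upwards [haeq] with q hq using hcore q hq x
  -- key pointwise identity
  have hkey : ∀ x : En n, f x * RTsynth ⇑ψ Φ x = ∫ q, F (q, x) ∂μq := by
    intro x
    have h1 : RTsynth ⇑ψ Φ x = ∫ q, (Φ q.1 q.2.2 q.2.1 * ridgelet ⇑ψ q.1 q.2.2 q.2.1 x
        * ((q.2.1 ^ n : ℝ) : ℂ)⁻¹) ∂μq := by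
      rw [hμqdef, integral_prod _ (hintq x), RTsynth]
      refine integral_congr_ae ?_
      filter_upwards [(hintq x).prod_right_ae] with u hu
      exact (integral_prod _ hu).symm
    rw [h1, ← integral_const_mul]
  have hswap : ∀ q : Sph n × ℝ × ℝ, (∫ x : En n, F (q, x)) =
      (∫ x : En n, f x * ridgelet ⇑ψ q.1 q.2.2 q.2.1 x) * Φ q.1 q.2.2 q.2.1
        * ((q.2.1 ^ n : ℝ) : ℂ)⁻¹ := by
    intro q
    have h1 : ∀ x : En n, F (q, x) = (f x * ridgelet ⇑ψ q.1 q.2.2 q.2.1 x)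
        * (Φ q.1 q.2.2 q.2.1 * ((q.2.1 ^ n : ℝ) : ℂ)⁻¹) := by
      intro x
      simp only [hFdef]
      ring
    simp_rw [h1]
    rw [integral_mul_const, mul_assoc]
  refine ⟨?_, ?_, ?_⟩
  · exact (hFint.integral_prod_right).congr (ae_of_all _ fun x => (hkey x).symm)
  · exact (hFint.integral_prod_left).congr (ae_of_all _ hswap)
  · have g2 : Integrable (fun q : Sph n × ℝ × ℝ => ∫ x : En n, F (q, x)) μq :=
      hFint.integral_prod_left
    calc ∫ x : En n, f x * RTsynth ⇑ψ Φ x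
        = ∫ x : En n, ∫ q, F (q, x) ∂μq := by
          exact integral_congr_ae (ae_of_all _ hkey)
      _ = ∫ q, (∫ x : En n, F (q, x)) ∂μq :=
          (integral_integral_swap hFint).symm
      _ = ∫ q, ((∫ x : En n, f x * ridgelet ⇑ψ q.1 q.2.2 q.2.1 x) * Φ q.1 q.2.2 q.2.1
            * ((q.2.1 ^ n : ℝ) : ℂ)⁻¹) ∂μq := integral_congr_ae (ae_of_all _ hswap)
      _ = ∫ u : Sph n, (∫ a in Ioi (0:ℝ),
            (∫ b : ℝ, (∫ x : En n, f x * ridgelet ⇑ψ u b a x) * Φ u b a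
              * ((a ^ n : ℝ) : ℂ)⁻¹)) ∂(sphMeasure n) := by
          rw [hμqdef, integral_prod _ (g2.congr (ae_of_all _ hswap))]
          refine integral_congr_ae ?_
          filter_upwards [(g2.congr (ae_of_all _ hswap)).prod_right_ae] with u hu
          exact integral_prod _ hu
end
end

section
/- Let f ∈ L¹(ℝⁿ) and ψ ∈ 𝓢(ℝ). Then for every (u,b,a) ∈ 𝕊^{n-1}×ℝ×(0,∞), R_ψ f(u,b,a) = (1/(2π)) ∫_ℝ f̂(ω u) · conj(ψ̂(a ω)) · e^{i b ω} dω. -/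
open MeasureTheory Metric Filter Set
open scoped Real ComplexConjugate Manifold

noncomputable section

section AuxRidgeletFourier

open scoped FourierTransform RealInnerProductSpace

lemma FT1_eq_fourier (h : ℝ → ℂ) (ω : ℝ) : FT1 h ω = 𝓕 h (ω / (2 * π)) := by
  rw [Real.fourier_eq']
  unfold FT1
  congr 1
  ext x
  rw [smul_eq_mul, mul_comm]
  have hπ : (π : ℂ) ≠ 0 := by exact_mod_cast Real.pi_ne_zero
  have : ((-2 * π * (x * (ω / (2 * π))) : ℝ) : ℂ) * Complex.I = -(Complex.I * ((x * ω : ℝ) : ℂ)) := by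
    push_cast
    field_simp
  simp only [RCLike.inner_apply, conj_trivial]
  rw [mul_comm (ω / (2 * π)) x, this]

lemma conj_exp_neg_I_mul (r : ℝ) :
    conj (Complex.exp (-(Complex.I * (r : ℂ)))) = Complex.exp (Complex.I * (r : ℂ)) := by
  rw [← Complex.exp_conj]
  simp [Complex.conj_I]

lemma ridgelet_key (ψ : SchwartzMap ℝ ℂ) {a : ℝ} (ha : 0 < a) (b t : ℝ) :
    (∫ ω : ℝ, conj (FT1 ⇑ψ (a * ω)) * Complex.exp (Complex.I * ((b * ω : ℝ) : ℂ))
        * Complex.exp (-(Complex.I * ((t * ω : ℝ) : ℂ))))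
      = ((2 * π / a : ℝ) : ℂ) * conj (ψ ((t - b) / a)) := by
  have hπ : (π : ℝ) ≠ 0 := Real.pi_ne_zero
  have ha' : a ≠ 0 := ha.ne'
  set g := SchwartzMap.fourierTransformCLM ℂ ψ with hgdef
  have hg : ⇑g = 𝓕 ⇑ψ := rfl
  set c : ℝ := a / (2 * π) with hcdef
  have hcpos : 0 < c := by positivity
  set θ : ℝ := 2 * π * (b - t) / a with hθdef
  set G : ℝ → ℂ := fun ξ => conj (𝓕 ⇑ψ ξ) * Complex.exp (Complex.I * ((θ * ξ : ℝ) : ℂ)) with hGdef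
  have hpt : ∀ ω : ℝ, conj (FT1 ⇑ψ (a * ω)) * Complex.exp (Complex.I * ((b * ω : ℝ) : ℂ))
      * Complex.exp (-(Complex.I * ((t * ω : ℝ) : ℂ))) = G (c * ω) := by
    intro ω
    have h1 : FT1 ⇑ψ (a * ω) = 𝓕 ⇑ψ (c * ω) := by
      rw [FT1_eq_fourier]
      congr 1
      rw [hcdef]
      ring
    have h2 : Complex.exp (Complex.I * ((b * ω : ℝ) : ℂ))
        * Complex.exp (-(Complex.I * ((t * ω : ℝ) : ℂ)))
        = Complex.exp (Complex.I * ((θ * (c * ω) : ℝ) : ℂ)) := by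
      rw [← Complex.exp_add]
      congr 1
      have : θ * (c * ω) = (b - t) * ω := by
        rw [hθdef, hcdef]; field_simp
      rw [this]
      push_cast
      ring
    rw [hGdef]
    simp only [h1, mul_assoc, h2]
  have hGint : ∫ ξ : ℝ, G ξ = conj (ψ ((t - b) / a)) := by
    have hptG : ∀ ξ : ℝ, G ξ = conj (𝓕 ⇑ψ ξ * Complex.exp (-(Complex.I * ((ξ * θ : ℝ) : ℂ)))) := by
      intro ξ
      rw [map_mul, conj_exp_neg_I_mul, hGdef]
      simp only [mul_comm ξ θ]
    have h3 : ∫ ξ : ℝ, G ξ = conj (FT1 (𝓕 ⇑ψ) θ) := by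
      simp_rw [hptG]
      rw [integral_conj]
      rfl
    rw [h3, FT1_eq_fourier]
    have h4 : θ / (2 * π) = (b - t) / a := by rw [hθdef]; field_simp
    rw [h4]
    have h5 : 𝓕 (𝓕 ⇑ψ) ((b - t) / a) = ψ ((t - b) / a) := by
      have hinv : 𝓕⁻ (𝓕 ⇑ψ) = ⇑ψ :=
        ψ.continuous.fourierInv_fourier_eq ψ.integrable (hg ▸ g.integrable)
      have := Real.fourierInv_eq_fourier_neg (𝓕 ⇑ψ) ((t - b) / a)
      rw [hinv] at this
      rw [this]
      congr 1
      ring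
    rw [h5]
  calc (∫ ω : ℝ, conj (FT1 ⇑ψ (a * ω)) * Complex.exp (Complex.I * ((b * ω : ℝ) : ℂ))
        * Complex.exp (-(Complex.I * ((t * ω : ℝ) : ℂ))))
      = ∫ ω : ℝ, G (c * ω) := by simp_rw [hpt]
    _ = |c⁻¹| • ∫ ξ : ℝ, G ξ := Measure.integral_comp_mul_left G c
    _ = ((2 * π / a : ℝ) : ℂ) * conj (ψ ((t - b) / a)) := by
        rw [hGint, abs_of_pos (inv_pos.2 hcpos), Complex.real_smul]
        congr 2
        rw [hcdef]
        field_simp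

end AuxRidgeletFourier

open scoped FourierTransform RealInnerProductSpace

/-- the Fourier formula for the ridgelet transform,
R_ψf(u,b,a) = (1/(2π)) ∫_ℝ f̂(ωu) conj(ψ̂(aω)) e^{ibω} dω. -/
theorem ridgelet_fourier_formula
    (n : ℕ) (hn : 2 ≤ n) (f : En n → ℂ) (hf : Integrable f) (ψ : SchwartzMap ℝ ℂ) :
    ∀ (u : Sph n) (b a : ℝ), 0 < a →
      RT ⇑ψ f u b a = ((2 * π : ℝ) : ℂ)⁻¹ *
        ∫ ω : ℝ, FTn f (ω • (u : En n)) * conj (FT1 ⇑ψ (a * ω))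
          * Complex.exp (Complex.I * (b * ω : ℝ)) := by
  intro u b a ha
  have hπ : (π : ℝ) ≠ 0 := Real.pi_ne_zero
  have hπC : (π : ℂ) ≠ 0 := by exact_mod_cast hπ
  have ha' : a ≠ 0 := ha.ne'
  have haC : (a : ℂ) ≠ 0 := by exact_mod_cast ha'
  set c : ℝ := a / (2 * π) with hcdef
  have hcpos : 0 < c := by positivity
  set g := SchwartzMap.fourierTransformCLM ℂ ψ with hgdef
  have hg : ⇑g = 𝓕 ⇑ψ := rfl
  have hFT1a : ∀ ω : ℝ, FT1 ⇑ψ (a * ω) = g (c * ω) := by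
    intro ω
    rw [FT1_eq_fourier, ← hg]
    congr 1
    rw [hcdef]
    ring
  have hFTa_int : Integrable (fun ω : ℝ => FT1 ⇑ψ (a * ω)) := by
    simp only [hFT1a]
    exact g.integrable.comp_mul_left' hcpos.ne'
  set Fu : En n → ℝ → ℂ := fun x ω => f x *
      (conj (FT1 ⇑ψ (a * ω)) * Complex.exp (Complex.I * ((b * ω : ℝ) : ℂ)) *
        Complex.exp (-(Complex.I * (((inner ℝ x (u : En n) : ℝ) * ω : ℝ) : ℂ)))) with hFudef
  have hcont : Continuous (fun p : En n × ℝ =>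
      conj (FT1 ⇑ψ (a * p.2)) * Complex.exp (Complex.I * ((b * p.2 : ℝ) : ℂ)) *
        Complex.exp (-(Complex.I * (((inner ℝ p.1 (u : En n) : ℝ) * p.2 : ℝ) : ℂ)))) := by
    have h1 : Continuous fun ω : ℝ => FT1 ⇑ψ (a * ω) := by
      simp only [hFT1a]
      exact g.continuous.comp (continuous_const.mul continuous_id)
    have hin : Continuous fun p : En n × ℝ => (inner ℝ p.1 (u : En n) : ℝ) :=
      continuous_fst.inner continuous_const
    have e1 : Continuous fun p : En n × ℝ => conj (FT1 ⇑ψ (a * p.2)) :=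
      (h1.comp continuous_snd).star
    have e2 : Continuous fun p : En n × ℝ => Complex.exp (Complex.I * ((b * p.2 : ℝ) : ℂ)) :=
      Complex.continuous_exp.comp (continuous_const.mul
        (Complex.continuous_ofReal.comp (continuous_const.mul continuous_snd)))
    have e3 : Continuous fun p : En n × ℝ =>
        Complex.exp (-(Complex.I * (((inner ℝ p.1 (u : En n) : ℝ) * p.2 : ℝ) : ℂ))) :=
      Complex.continuous_exp.comp (((continuous_const.mul
        (Complex.continuous_ofReal.comp (hin.mul continuous_snd)))).neg)
    exact (e1.mul e2).mul e3
  have hFu_meas : AEStronglyMeasurable (fun p : En n × ℝ => Fu p.1 p.2)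
      ((volume : Measure (En n)).prod (volume : Measure ℝ)) :=
    hf.aestronglyMeasurable.comp_fst.mul hcont.aestronglyMeasurable
  have hFu_int : Integrable (fun p : En n × ℝ => Fu p.1 p.2)
      ((volume : Measure (En n)).prod (volume : Measure ℝ)) := by
    refine (hf.norm.mul_prod hFTa_int.norm).mono' hFu_meas ?_
    filter_upwards with p
    simp only [hFudef, norm_mul, RCLike.norm_conj, norm_norm]
    have e1 : ‖Complex.exp (Complex.I * ((b * p.2 : ℝ) : ℂ))‖ = 1 := by
      rw [mul_comm]
      exact Complex.norm_exp_ofReal_mul_I _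
    have e2 : ‖Complex.exp (-(Complex.I * (((inner ℝ p.1 (u : En n) : ℝ) * p.2 : ℝ) : ℂ)))‖ = 1 := by
      rw [show -(Complex.I * (((inner ℝ p.1 (u : En n) : ℝ) * p.2 : ℝ) : ℂ))
          = ((-((inner ℝ p.1 (u : En n) : ℝ) * p.2) : ℝ) : ℂ) * Complex.I by push_cast; ring]
      exact Complex.norm_exp_ofReal_mul_I _
    rw [e1, e2]
    ring_nf
    exact le_rfl

  have hkey : ∀ x : En n, f x * conj (ridgelet ⇑ψ u b a x)
      = ((2 * π : ℝ) : ℂ)⁻¹ * ∫ ω : ℝ, Fu x ω := by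
    intro x
    have hconj : conj (ridgelet ⇑ψ u b a x)
        = ((a : ℝ) : ℂ)⁻¹ * conj (ψ (((inner ℝ x (u : En n) : ℝ) - b) / a)) := by
      simp [ridgelet, map_mul, map_inv₀, Complex.conj_ofReal]
    have hint : ∫ ω : ℝ, Fu x ω
        = f x * (((2 * π / a : ℝ) : ℂ) * conj (ψ (((inner ℝ x (u : En n) : ℝ) - b) / a))) := by
      rw [hFudef]
      rw [integral_const_mul]
      rw [ridgelet_key ψ ha b ((inner ℝ x (u : En n) : ℝ))]
    rw [hconj, hint]
    have hc2 : ((2 * π : ℝ) : ℂ)⁻¹ * ((2 * π / a : ℝ) : ℂ) = ((a : ℝ) : ℂ)⁻¹ := by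
      push_cast
      field_simp
    rw [← hc2]
    ring
  have hswap : ∫ x : En n, ∫ ω : ℝ, Fu x ω = ∫ ω : ℝ, ∫ x : En n, Fu x ω :=
    integral_integral_swap hFu_int
  have hinner : ∀ ω : ℝ, ∫ x : En n, Fu x ω
      = FTn f (ω • (u : En n)) * conj (FT1 ⇑ψ (a * ω))
        * Complex.exp (Complex.I * ((b * ω : ℝ) : ℂ)) := by
    intro ω
    have hptw : ∀ x : En n, Fu x ω
        = (f x * Complex.exp (-(Complex.I * ((inner ℝ x (ω • (u : En n)) : ℝ) : ℂ))))
          * (conj (FT1 ⇑ψ (a * ω)) * Complex.exp (Complex.I * ((b * ω : ℝ) : ℂ))) := by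
      intro x
      rw [hFudef]
      rw [real_inner_smul_right, mul_comm ω ((inner ℝ x (u : En n) : ℝ))]
      ring
    simp_rw [hptw]
    rw [integral_mul_const]
    rw [← mul_assoc]
    rfl
  unfold RT
  calc (∫ x : En n, f x * conj (ridgelet ⇑ψ u b a x))
      = ∫ x : En n, ((2 * π : ℝ) : ℂ)⁻¹ * ∫ ω : ℝ, Fu x ω := by
        exact integral_congr_ae (Filter.Eventually.of_forall hkey)
    _ = ((2 * π : ℝ) : ℂ)⁻¹ * ∫ x : En n, ∫ ω : ℝ, Fu x ω := integral_const_mul _ _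
    _ = ((2 * π : ℝ) : ℂ)⁻¹ * ∫ ω : ℝ, ∫ x : En n, Fu x ω := by rw [hswap]
    _ = ((2 * π : ℝ) : ℂ)⁻¹ * ∫ ω : ℝ, FTn f (ω • (u : En n)) * conj (FT1 ⇑ψ (a * ω))
          * Complex.exp (Complex.I * ((b * ω : ℝ) : ℂ)) := by
        congr 1
        exact integral_congr_ae (Filter.Eventually.of_forall hinner)
end
end

section
/- For every integer s ≥ 1 there exists C > 0 such that for all φ ∈ 𝓢₀(ℝⁿ), all ψ ∈ 𝓢(ℝ), and all (u,b,a) ∈ 𝕊^{n-1}×ℝ×(0,∞): a^s |R_ψ φ(u,b,a)| ≤ C ρ_{s+n}(φ) ρ_{s+1}(ψ). -/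
open MeasureTheory Metric Filter Set
open scoped Real ComplexConjugate Manifold

noncomputable section

section AuxRidgelet

open Finset

/-- Each term is below the sup defining `rho`. -/
lemma le_rho {E : Type*} [NormedAddCommGroup E] [NormedSpace ℝ E] (ν k : ℕ) (hk : k ≤ ν)
    (φ : SchwartzMap E ℂ) (x : E) :
    (1 + ‖x‖) ^ ν * ‖iteratedFDeriv ℝ k (⇑φ) x‖ ≤ rho ν ⇑φ := by
  have hbdd : BddAbove (Set.range fun q : E × Fin (ν + 1) =>
      (1 + ‖q.1‖) ^ ν * ‖iteratedFDeriv ℝ q.2.1 (⇑φ) q.1‖) := by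
    refine ⟨2 ^ ν * (Finset.Iic (ν, ν)).sup (schwartzSeminormFamily ℝ E ℂ) φ, ?_⟩
    rintro r ⟨q, rfl⟩
    exact SchwartzMap.one_add_le_sup_seminorm_apply (𝕜 := ℝ) (m := (ν, ν)) le_rfl
      (Nat.lt_succ_iff.mp q.2.2) φ q.1
  exact le_ciSup hbdd (⟨x, ⟨k, Nat.lt_succ_of_le hk⟩⟩ : E × Fin (ν + 1))

lemma rho_nonneg {E : Type*} [NormedAddCommGroup E] [NormedSpace ℝ E] (ν : ℕ)
    (φ : SchwartzMap E ℂ) : 0 ≤ rho ν ⇑φ :=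
  le_trans (by positivity) (le_rho ν 0 (Nat.zero_le _) φ 0)

lemma norm_le_rho {E : Type*} [NormedAddCommGroup E] [NormedSpace ℝ E] (ν : ℕ)
    (φ : SchwartzMap E ℂ) (x : E) :
    (1 + ‖x‖) ^ ν * ‖φ x‖ ≤ rho ν ⇑φ := by
  simpa [norm_iteratedFDeriv_zero] using le_rho ν 0 (Nat.zero_le _) φ x

lemma iteratedDeriv_le_rho (ν k : ℕ) (hk : k ≤ ν) (ψ : SchwartzMap ℝ ℂ) (y : ℝ) :
    ‖iteratedDeriv k (⇑ψ) y‖ ≤ rho ν ⇑ψ := by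
  have h := le_rho ν k hk ψ y
  rw [norm_iteratedFDeriv_eq_norm_iteratedDeriv] at h
  have h1 : (1 : ℝ) ≤ (1 + ‖y‖) ^ ν := one_le_pow₀ (by linarith [norm_nonneg y])
  nlinarith [norm_nonneg (iteratedDeriv k (⇑ψ) y)]

lemma abs_sub_le_of_mem_uIcc {c t y : ℝ} (hy : y ∈ Set.uIcc c t) : |y - c| ≤ |t - c| := by
  rcases le_total c t with h | h
  · rw [Set.uIcc_of_le h] at hy
    rw [abs_of_nonneg (by linarith [hy.1]), abs_of_nonneg (by linarith)]
    linarith [hy.2]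
  · rw [Set.uIcc_of_ge h] at hy
    rw [abs_of_nonpos (by linarith [hy.2]), abs_of_nonpos (by linarith)]
    linarith [hy.1]

/-- Quantitative Taylor remainder bound with loss of a factor 2. -/
lemma taylor_remainder_bound : ∀ (m : ℕ) (g : ℝ → ℂ), ContDiff ℝ ((⊤ : ℕ∞)) g → ∀ (M : ℝ),
    (∀ y, ‖iteratedDeriv m g y‖ ≤ M) → ∀ (c t : ℝ),
    ‖g t - ∑ k ∈ Finset.range (m + 1), (((t - c) ^ k / k.factorial : ℝ)) • iteratedDeriv k g c‖
      ≤ 2 * M * |t - c| ^ m := by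
  intro m
  induction m with
  | zero =>
    intro g hg M hM c t
    simp only [zero_add, Finset.range_one, Finset.sum_singleton, pow_zero, Nat.factorial_zero,
      Nat.cast_one, div_one, one_smul, iteratedDeriv_zero]
    calc ‖g t - g c‖ ≤ ‖g t‖ + ‖g c‖ := norm_sub_le _ _
      _ ≤ 2 * M * |t - c| ^ 0 := by
          have h1 := hM t; have h2 := hM c
          simp only [iteratedDeriv_zero] at h1 h2
          simp only [pow_zero, mul_one]; linarith
  | succ m ih =>
    intro g hg M hM c t
    have hM0 : 0 ≤ M := le_trans (norm_nonneg _) (hM c)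
    set d : ℕ → ℂ := fun k => iteratedDeriv k g c with hd
    set F : ℝ → ℂ := fun y =>
      g y - ∑ k ∈ Finset.range (m + 1 + 1), (((y - c) ^ k / k.factorial : ℝ)) • d k with hF
    set F' : ℝ → ℂ := fun y =>
      deriv g y - ∑ k ∈ Finset.range (m + 1),
        (((y - c) ^ k / k.factorial : ℝ)) • iteratedDeriv k (deriv g) c with hF'
    have hder : ∀ y, HasDerivAt F (F' y) y := by
      intro y
      have h1 : HasDerivAt g (deriv g y) y :=
        ((hg.differentiable (by simp)) y).hasDerivAt
      have h2 : ∀ k ∈ Finset.range (m + 1 + 1),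
          HasDerivAt (fun z : ℝ => (((z - c) ^ k / k.factorial : ℝ)) • d k)
            ((((k : ℝ) * (y - c) ^ (k - 1) / k.factorial : ℝ)) • d k) y := by
        intro k _
        have hp : HasDerivAt (fun z : ℝ => (z - c) ^ k) ((k : ℝ) * (y - c) ^ (k - 1)) y := by
          simpa using ((hasDerivAt_id y).sub_const c).fun_pow k
        exact (hp.div_const _).smul_const (d k)
      have hsum := HasDerivAt.fun_sum h2
      have := h1.fun_sub hsum
      convert this using 1
      show deriv g y - ∑ k ∈ Finset.range (m + 1),
        (((y - c) ^ k / k.factorial : ℝ)) • iteratedDeriv k (deriv g) c = _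
      congr 1
      conv_rhs => rw [Finset.sum_range_succ']
      have h0 : ((((0 : ℕ) : ℝ) * (y - c) ^ (0 - 1) / (0:ℕ).factorial : ℝ)) • d 0 = 0 := by
        simp
      rw [h0, add_zero]
      refine Finset.sum_congr rfl fun k _ => ?_
      have hfac : ((k + 1).factorial : ℝ) = ((k : ℝ) + 1) * k.factorial := by
        rw [Nat.factorial_succ]; push_cast; ring
      have hdk : d (k + 1) = iteratedDeriv k (deriv g) c := by
        simp only [hd]
        rw [iteratedDeriv_succ']
      rw [hdk]
      congr 1
      rw [Nat.add_sub_cancel, hfac]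
      have hk0 : ((k : ℝ) + 1) ≠ 0 := by positivity
      have hk1 : ((k.factorial : ℝ)) ≠ 0 := by positivity
      push_cast
      field_simp
      rfl
    have hbound : ∀ y ∈ Set.uIcc c t, ‖F' y‖ ≤ 2 * M * |t - c| ^ m := by
      intro y hy
      have hg' : ContDiff ℝ ((⊤ : ℕ∞)) (deriv g) := (contDiff_infty_iff_deriv.mp hg).2
      have hM' : ∀ z, ‖iteratedDeriv m (deriv g) z‖ ≤ M := by
        intro z
        rw [← iteratedDeriv_succ']
        exact hM z
      have h1 := ih (deriv g) hg' M hM' c y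
      refine le_trans h1 ?_
      have := abs_sub_le_of_mem_uIcc hy
      gcongr
    have key := Convex.norm_image_sub_le_of_norm_hasDerivWithin_le
      (f := F) (f' := F') (s := Set.uIcc c t)
      (fun y _ => (hder y).hasDerivWithinAt) hbound (convex_uIcc c t)
      Set.left_mem_uIcc Set.right_mem_uIcc
    have hFc : F c = 0 := by
      rw [hF]
      simp only
      rw [Finset.sum_eq_single 0]
      · simp [hd]
      · intro k _ hk
        simp [sub_self, zero_pow hk]
      · intro h; exact absurd (Finset.mem_range.mpr (Nat.succ_pos _)) h
    calc ‖g t - ∑ k ∈ Finset.range (m + 1 + 1),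
          (((t - c) ^ k / k.factorial : ℝ)) • iteratedDeriv k g c‖
        = ‖F t - F c‖ := by rw [hFc, sub_zero]
      _ ≤ (2 * M * |t - c| ^ m) * ‖t - c‖ := key
      _ = 2 * M * |t - c| ^ (m + 1) := by
          rw [Real.norm_eq_abs, pow_succ]; ring

lemma abs_coord_le_norm {n : ℕ} (x : En n) (i : Fin n) : |x i| ≤ ‖x‖ := by
  rw [EuclideanSpace.norm_eq]
  have h1 : ‖x i‖ ^ 2 ≤ ∑ j, ‖x j‖ ^ 2 :=
    Finset.single_le_sum (fun j _ => sq_nonneg ‖x j‖) (Finset.mem_univ i)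
  calc |x i| = Real.sqrt (‖x i‖ ^ 2) := by
        rw [Real.sqrt_sq_eq_abs, Real.norm_eq_abs, abs_abs]
    _ ≤ Real.sqrt (∑ j, ‖x j‖ ^ 2) := Real.sqrt_le_sqrt h1

lemma integrable_mul_of_poly_bound {n : ℕ} (φ : SchwartzMap (En n) ℂ) (h : En n → ℂ)
    (hc : Continuous h) (k : ℕ) (D : ℝ)
    (hD : ∀ x, ‖h x‖ ≤ D * (1 + ‖x‖) ^ k) :
    Integrable (fun x => φ x * h x) (volume : Measure (En n)) := by
  have hD0 : 0 ≤ D := by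
    have h0 := (norm_nonneg (h 0)).trans (hD 0)
    nlinarith [pow_pos (by linarith [norm_nonneg (0 : En n)] : (0:ℝ) < 1 + ‖(0 : En n)‖) k]
  refine Integrable.mono'
    ((((φ.integrable (μ := volume)).norm.add (φ.integrable_pow_mul volume k)).const_mul
      (D * 2 ^ k))) ((φ.continuous.mul hc).aestronglyMeasurable) ?_
  filter_upwards with x
  have hx0 : (0:ℝ) ≤ ‖x‖ := norm_nonneg x
  have h1 : (1 + ‖x‖) ^ k ≤ 2 ^ k * (1 + ‖x‖ ^ k) := by
    rcases le_total ‖x‖ 1 with hx | hx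
    · calc (1 + ‖x‖) ^ k ≤ 2 ^ k := by gcongr <;> linarith
        _ ≤ 2 ^ k * (1 + ‖x‖ ^ k) := by nlinarith [pow_nonneg hx0 k, pow_pos (zero_lt_two (α := ℝ)) k]
    · calc (1 + ‖x‖) ^ k ≤ (2 * ‖x‖) ^ k := by gcongr; linarith
        _ = 2 ^ k * ‖x‖ ^ k := mul_pow 2 ‖x‖ k
        _ ≤ 2 ^ k * (1 + ‖x‖ ^ k) := by nlinarith [pow_pos (zero_lt_two (α := ℝ)) k]
  calc ‖φ x * h x‖ = ‖φ x‖ * ‖h x‖ := norm_mul _ _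
    _ ≤ ‖φ x‖ * (D * (1 + ‖x‖) ^ k) := by
        exact mul_le_mul_of_nonneg_left (hD x) (norm_nonneg _)
    _ ≤ ‖φ x‖ * (D * (2 ^ k * (1 + ‖x‖ ^ k))) := by
        have := mul_le_mul_of_nonneg_left h1 hD0
        exact mul_le_mul_of_nonneg_left this (norm_nonneg _)
    _ = D * 2 ^ k * (‖φ x‖ + ‖x‖ ^ k * ‖φ x‖) := by ring

lemma moment_zero {n : ℕ} (φ : SchwartzMap (En n) ℂ) (hφ : LizorkinN ⇑φ) (u : En n) (k : ℕ) :
    ∫ x : En n, φ x * ((inner ℝ x u : ℝ) : ℂ) ^ k = 0 := by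
  have hinner : ∀ x : En n, ((inner ℝ x u : ℝ) : ℂ) = ∑ i, (x i : ℂ) * (u i : ℂ) := by
    intro x
    have : (inner ℝ x u : ℝ) = ∑ i, x i * u i := by
      simp [PiLp.inner_apply, RCLike.inner_apply, mul_comm]
    rw [this]; push_cast; rfl
  have hexp : ∀ x : En n, ((inner ℝ x u : ℝ) : ℂ) ^ k
      = ∑ m ∈ Finset.piAntidiag Finset.univ k,
          ((Nat.multinomial Finset.univ m : ℂ) * ∏ i, (u i : ℂ) ^ m i)
            * ∏ i, (x i : ℂ) ^ m i := by
    intro x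
    rw [hinner x, Finset.sum_pow_eq_sum_piAntidiag]
    refine Finset.sum_congr rfl fun m _ => ?_
    rw [mul_assoc]
    congr 1
    rw [← Finset.prod_mul_distrib]
    refine Finset.prod_congr rfl fun i _ => ?_
    rw [mul_pow]
    ring
  have hint : ∀ m ∈ Finset.piAntidiag (Finset.univ : Finset (Fin n)) k,
      Integrable (fun x : En n => φ x *
        (((Nat.multinomial Finset.univ m : ℂ) * ∏ i, (u i : ℂ) ^ m i)
          * ∏ i, (x i : ℂ) ^ m i)) (volume : Measure (En n)) := by
    intro m hm
    have hsum : ∑ i, m i = k := ((Finset.mem_piAntidiag).mp hm).1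
    set Cm : ℂ := (Nat.multinomial Finset.univ m : ℂ) * ∏ i, (u i : ℂ) ^ m i with hCm
    refine integrable_mul_of_poly_bound φ _ ?_ k ‖Cm‖ ?_
    · exact continuous_const.mul (continuous_finset_prod _ fun i _ =>
        ((Complex.continuous_ofReal.comp (EuclideanSpace.proj i).continuous).pow _))
    · intro x
      rw [norm_mul]
      refine mul_le_mul_of_nonneg_left ?_ (norm_nonneg Cm)
      calc ‖∏ i, (x i : ℂ) ^ m i‖ = ∏ i, |x i| ^ m i := by
            rw [norm_prod]
            refine Finset.prod_congr rfl fun i _ => ?_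
            rw [norm_pow, Complex.norm_real, Real.norm_eq_abs]
        _ ≤ ∏ i, ‖x‖ ^ m i := by
            refine Finset.prod_le_prod (fun i _ => by positivity) fun i _ => ?_
            exact pow_le_pow_left₀ (abs_nonneg _) (abs_coord_le_norm x i) _
        _ = ‖x‖ ^ k := by rw [Finset.prod_pow_eq_pow_sum, hsum]
        _ ≤ (1 + ‖x‖) ^ k := by gcongr; linarith [norm_nonneg x]
  calc (∫ x : En n, φ x * ((inner ℝ x u : ℝ) : ℂ) ^ k)
      = ∫ x : En n, ∑ m ∈ Finset.piAntidiag Finset.univ k,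
          φ x * (((Nat.multinomial Finset.univ m : ℂ) * ∏ i, (u i : ℂ) ^ m i)
            * ∏ i, (x i : ℂ) ^ m i) := by
        refine integral_congr_ae (Filter.Eventually.of_forall fun x => ?_)
        simp only [hexp, Finset.mul_sum]
    _ = ∑ m ∈ Finset.piAntidiag Finset.univ k, ∫ x : En n,
          φ x * (((Nat.multinomial Finset.univ m : ℂ) * ∏ i, (u i : ℂ) ^ m i)
            * ∏ i, (x i : ℂ) ^ m i) := integral_finset_sum _ hint
    _ = 0 := by
        refine Finset.sum_eq_zero fun m _ => ?_
        have : ∀ x : En n, φ x * (((Nat.multinomial Finset.univ m : ℂ) * ∏ i, (u i : ℂ) ^ m i)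
            * ∏ i, (x i : ℂ) ^ m i)
            = ((Nat.multinomial Finset.univ m : ℂ) * ∏ i, (u i : ℂ) ^ m i)
              * ((∏ i, (x i : ℂ) ^ m i) * φ x) := by intro x; ring
        simp_rw [this]
        rw [MeasureTheory.integral_const_mul, hφ m, mul_zero]

lemma integrable_japanese (n : ℕ) (hn : 1 ≤ n) :
    Integrable (fun x : En n => ((1 + ‖x‖) ^ (n + 1))⁻¹) (volume : Measure (En n)) := by
  have h := integrable_one_add_norm (E := En n) (μ := volume) (r := (n + 1 : ℝ))
    (by rw [finrank_euclideanSpace_fin]; exact_mod_cast lt_add_one n)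
  refine h.congr (Filter.Eventually.of_forall fun x => ?_)
  have hb : (0:ℝ) < 1 + ‖x‖ := by linarith [norm_nonneg x]
  beta_reduce
  rw [show (-((n:ℝ) + 1)) = -(((n + 1 : ℕ) : ℝ)) by push_cast; ring,
    Real.rpow_neg hb.le, Real.rpow_natCast]

end AuxRidgelet

/-- for s ≥ 1 there is C > 0 with
a^s |R_ψφ(u,b,a)| ≤ C ρ_{s+n}(φ) ρ_{s+1}(ψ) for φ ∈ 𝓢₀(ℝⁿ) and ψ ∈ 𝓢(ℝ). -/
theorem ridgelet_large_scale_estimate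
    (n : ℕ) (hn : 2 ≤ n) (s : ℕ) (hs : 1 ≤ s) :
    ∃ C : ℝ, 0 < C ∧
      ∀ (φ : SchwartzMap (En n) ℂ), LizorkinN ⇑φ →
      ∀ (ψ : SchwartzMap ℝ ℂ) (u : Sph n) (b a : ℝ), 0 < a →
        a ^ s * ‖RT ⇑ψ ⇑φ u b a‖ ≤ C * rho (s + n) ⇑φ * rho (s + 1) ⇑ψ := by
  obtain ⟨s', rfl⟩ : ∃ s', s = s' + 1 := ⟨s - 1, (Nat.succ_pred_eq_of_pos hs).symm⟩
  have hn1 : 1 ≤ n := le_trans one_le_two hn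
  set I : ℝ := ∫ x : En n, ((1 + ‖x‖) ^ (n + 1))⁻¹ with hIdef
  have hIint := integrable_japanese n hn1
  have hI0 : 0 ≤ I := integral_nonneg fun x => by positivity
  refine ⟨2 * I + 2, by positivity, ?_⟩
  intro φ hφ ψ u b a ha
  set ρφ := rho (s' + 1 + n) ⇑φ with hρφdef
  set ρψ := rho (s' + 1 + 1) ⇑ψ with hρψdef
  have hρφ0 : 0 ≤ ρφ := rho_nonneg _ _
  have hρψ0 : 0 ≤ ρψ := rho_nonneg _ _
  have hu1 : ‖(u : En n)‖ = 1 := mem_sphere_zero_iff_norm.mp u.2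
  have ha' : (a : ℝ) ≠ 0 := ne_of_gt ha
  have hφb : ∀ x : En n, ‖φ x‖ ≤ ρφ / (1 + ‖x‖) ^ (s' + 1 + n) := by
    intro x
    rw [le_div_iff₀ (by positivity)]
    calc ‖φ x‖ * (1 + ‖x‖) ^ (s' + 1 + n) = (1 + ‖x‖) ^ (s' + 1 + n) * ‖φ x‖ := mul_comm _ _
      _ ≤ ρφ := norm_le_rho _ φ x
  have hψb : ∀ y : ℝ, ‖ψ y‖ ≤ ρψ := by
    intro y
    have h := norm_le_rho (s' + 1 + 1) ψ y
    have h1 : (1:ℝ) ≤ (1 + ‖y‖) ^ (s' + 1 + 1) := one_le_pow₀ (by linarith [norm_nonneg y])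
    nlinarith [norm_nonneg (ψ y)]
  have hinle : ∀ x : En n, |(inner ℝ x (u : En n) : ℝ)| ≤ ‖x‖ := by
    intro x
    calc |(inner ℝ x (u : En n) : ℝ)| ≤ ‖x‖ * ‖(u : En n)‖ := abs_real_inner_le_norm x _
      _ = ‖x‖ := by rw [hu1, mul_one]
  have hmono : ∀ x : En n, ((1 + ‖x‖) ^ (s' + 1 + n))⁻¹ ≤ ((1 + ‖x‖) ^ (n + 1))⁻¹ := by
    intro x
    have hb1 : (0:ℝ) < 1 + ‖x‖ := by linarith [norm_nonneg x]
    have h2 : (1 + ‖x‖) ^ (n + 1) ≤ (1 + ‖x‖) ^ (s' + 1 + n) :=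
      pow_le_pow_right₀ (by linarith [norm_nonneg x]) (by omega)
    exact inv_anti₀ (by positivity) h2
  set gl : En n → ℝ := fun x => ((inner ℝ x (u : En n) : ℝ) - b) / a with hgl
  have hglcont : Continuous gl :=
    ((continuous_id.inner continuous_const).sub continuous_const).div_const a
  set f₁ : En n → ℂ := fun x => φ x * conj (ψ (gl x)) with hf₁
  have hf₁cont : Continuous fun x : En n => conj (ψ (gl x)) :=
    Complex.continuous_conj.comp (ψ.continuous.comp hglcont)
  have hf₁int : Integrable f₁ (volume : Measure (En n)) := by
    refine integrable_mul_of_poly_bound φ _ hf₁cont 0 ρψ fun x => ?_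
    rw [pow_zero, mul_one, RCLike.norm_conj]
    exact hψb (gl x)
  have hRT : RT ⇑ψ ⇑φ u b a = ((a : ℝ) : ℂ)⁻¹ * ∫ x : En n, f₁ x := by
    rw [RT, ← MeasureTheory.integral_const_mul]
    refine integral_congr_ae (Filter.Eventually.of_forall fun x => ?_)
    simp only [hf₁, ridgelet, map_mul, map_inv₀, Complex.conj_ofReal, hgl]
    ring
  have hnorm_a : ‖((a : ℝ) : ℂ)⁻¹‖ = a⁻¹ := by
    rw [norm_inv, Complex.norm_real, Real.norm_eq_abs, abs_of_pos ha]
  rcases le_total a 1 with hA | hA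
  · -- small scale: a ≤ 1
    have hpt1 : ∀ x : En n, ‖f₁ x‖ ≤ ρψ * ρφ * ((1 + ‖x‖) ^ (n + 1))⁻¹ := by
      intro x
      simp only [hf₁]
      rw [norm_mul, RCLike.norm_conj]
      calc ‖φ x‖ * ‖ψ (gl x)‖ ≤ (ρφ / (1 + ‖x‖) ^ (s' + 1 + n)) * ρψ :=
            mul_le_mul (hφb x) (hψb _) (norm_nonneg _) (by positivity)
        _ = ρψ * ρφ * ((1 + ‖x‖) ^ (s' + 1 + n))⁻¹ := by rw [div_eq_mul_inv]; ring
        _ ≤ ρψ * ρφ * ((1 + ‖x‖) ^ (n + 1))⁻¹ :=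
            mul_le_mul_of_nonneg_left (hmono x) (mul_nonneg hρψ0 hρφ0)
    have hbound1 : ‖∫ x : En n, f₁ x‖ ≤ ρψ * ρφ * I := by
      refine (norm_integral_le_integral_norm _).trans ?_
      refine (integral_mono_of_nonneg (Filter.Eventually.of_forall fun x => norm_nonneg (f₁ x))
        (hIint.const_mul (ρψ * ρφ)) (Filter.Eventually.of_forall hpt1)).trans ?_
      rw [MeasureTheory.integral_const_mul]
    calc a ^ (s' + 1) * ‖RT ⇑ψ ⇑φ u b a‖
        = a ^ (s' + 1) * (a⁻¹ * ‖∫ x : En n, f₁ x‖) := by rw [hRT, norm_mul, hnorm_a]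
      _ = a ^ s' * (a * a⁻¹) * ‖∫ x : En n, f₁ x‖ := by rw [pow_succ]; ring
      _ = a ^ s' * ‖∫ x : En n, f₁ x‖ := by rw [mul_inv_cancel₀ ha', mul_one]
      _ ≤ 1 * (ρψ * ρφ * I) := by
          refine mul_le_mul ?_ hbound1 (norm_nonneg _) one_pos.le
          exact pow_le_one₀ ha.le hA
      _ ≤ (2 * I + 2) * ρφ * ρψ := by
          nlinarith [mul_nonneg hρφ0 hρψ0, mul_nonneg (mul_nonneg hρψ0 hρφ0) hI0]
  · -- large scale: 1 ≤ a
    set c : ℝ := -b / a with hc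
    have htc : ∀ x : En n, gl x - c = (inner ℝ x (u : En n) : ℝ) / a := by
      intro x
      simp only [hgl, hc]
      field_simp
      ring
    have h1glc : ∀ x : En n, |gl x - c| ≤ (1 + ‖x‖) * a⁻¹ := by
      intro x
      rw [htc x, abs_div, abs_of_pos ha, div_eq_mul_inv]
      refine mul_le_mul_of_nonneg_right ?_ (inv_nonneg.mpr ha.le)
      exact (hinle x).trans (by linarith [norm_nonneg x])
    set Tay : ℝ → ℂ := fun y => ∑ k ∈ Finset.range (s' + 1),
      (((y - c) ^ k / k.factorial : ℝ)) • iteratedDeriv k (⇑ψ) c with hTay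
    have htaylor : ∀ y : ℝ, ‖ψ y - Tay y‖ ≤ 2 * ρψ * |y - c| ^ s' := fun y =>
      taylor_remainder_bound s' ⇑ψ (ψ.smooth ⊤) ρψ
        (fun z => iteratedDeriv_le_rho (s' + 1 + 1) s' (by omega) ψ z) c y
    set f₂ : En n → ℂ := fun x => φ x * conj (Tay (gl x)) with hf₂
    have hf₂eq : f₂ = fun x => ∑ k ∈ Finset.range (s' + 1),
        φ x * ((((gl x - c) ^ k / k.factorial : ℝ)) • conj (iteratedDeriv k (⇑ψ) c)) := by
      funext x
      simp only [hf₂, hTay, map_sum, Finset.mul_sum]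
      refine Finset.sum_congr rfl fun k _ => ?_
      congr 1
      rw [starRingEnd_apply, star_smul, star_trivial, ← starRingEnd_apply]
    have hterm_int : ∀ k ∈ Finset.range (s' + 1), Integrable (fun x : En n =>
        φ x * ((((gl x - c) ^ k / k.factorial : ℝ)) • conj (iteratedDeriv k (⇑ψ) c)))
        (volume : Measure (En n)) := by
      intro k _
      refine integrable_mul_of_poly_bound φ _ ?_ k
        ((a⁻¹) ^ k / (k.factorial : ℝ) * ‖iteratedDeriv k (⇑ψ) c‖) ?_
      · exact (((hglcont.sub continuous_const).pow k).div_const _).smul continuous_const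
      · intro x
        rw [norm_smul, RCLike.norm_conj, Real.norm_eq_abs, abs_div, abs_pow, Nat.abs_cast]
        have h5 : |gl x - c| ^ k ≤ (1 + ‖x‖) ^ k * (a⁻¹) ^ k := by
          rw [← mul_pow]
          exact pow_le_pow_left₀ (abs_nonneg _) (h1glc x) k
        calc |gl x - c| ^ k / (k.factorial : ℝ) * ‖iteratedDeriv k (⇑ψ) c‖
            ≤ ((1 + ‖x‖) ^ k * (a⁻¹) ^ k) / (k.factorial : ℝ) * ‖iteratedDeriv k (⇑ψ) c‖ := by
              gcongr
          _ = (a⁻¹) ^ k / (k.factorial : ℝ) * ‖iteratedDeriv k (⇑ψ) c‖ * (1 + ‖x‖) ^ k := by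
              ring
    have hf₂int : Integrable f₂ (volume : Measure (En n)) := by
      rw [hf₂eq]
      exact integrable_finset_sum _ hterm_int
    have haC : ((a : ℝ) : ℂ) ≠ 0 := Complex.ofReal_ne_zero.mpr ha'
    have hf₂zero : ∫ x : En n, f₂ x = 0 := by
      rw [hf₂eq, integral_finset_sum _ hterm_int]
      refine Finset.sum_eq_zero fun k _ => ?_
      have hx : ∀ x : En n,
          φ x * ((((gl x - c) ^ k / k.factorial : ℝ)) • conj (iteratedDeriv k (⇑ψ) c))
          = ((((a⁻¹ : ℝ) ^ k / k.factorial : ℝ) : ℂ) * conj (iteratedDeriv k (⇑ψ) c))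
            * (φ x * ((inner ℝ x (u : En n) : ℝ) : ℂ) ^ k) := by
        intro x
        rw [htc x, Complex.real_smul]
        push_cast
        field_simp
        ring
      simp_rw [hx]
      rw [MeasureTheory.integral_const_mul, moment_zero φ hφ (u : En n) k, mul_zero]
    have hsplit : ∫ x : En n, f₁ x = ∫ x : En n, (f₁ x - f₂ x) := by
      rw [integral_sub hf₁int hf₂int, hf₂zero, sub_zero]
    have hpt : ∀ x : En n,
        ‖f₁ x - f₂ x‖ ≤ 2 * ρψ * ρφ * (a⁻¹) ^ s' * ((1 + ‖x‖) ^ (n + 1))⁻¹ := by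
      intro x
      have hb1 : (0:ℝ) < 1 + ‖x‖ := by linarith [norm_nonneg x]
      have heq : f₁ x - f₂ x = φ x * conj (ψ (gl x) - Tay (gl x)) := by
        simp only [hf₁, hf₂]
        rw [← mul_sub, ← map_sub]
      rw [heq, norm_mul, RCLike.norm_conj]
      have h3 : |gl x - c| ^ s' ≤ (1 + ‖x‖) ^ s' * (a⁻¹) ^ s' := by
        rw [← mul_pow]
        exact pow_le_pow_left₀ (abs_nonneg _) (h1glc x) s'
      calc ‖φ x‖ * ‖ψ (gl x) - Tay (gl x)‖
          ≤ (ρφ / (1 + ‖x‖) ^ (s' + 1 + n)) * (2 * ρψ * ((1 + ‖x‖) ^ s' * (a⁻¹) ^ s')) := by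
            refine mul_le_mul (hφb x) ((htaylor (gl x)).trans ?_) (norm_nonneg _) (by positivity)
            exact mul_le_mul_of_nonneg_left h3 (by linarith)
        _ = 2 * ρψ * ρφ * (a⁻¹) ^ s' * ((1 + ‖x‖) ^ (n + 1))⁻¹ := by
            have hsp : (1 + ‖x‖) ^ (s' + 1 + n) = (1 + ‖x‖) ^ s' * (1 + ‖x‖) ^ (n + 1) := by
              rw [← pow_add]
              congr 1
              omega
            rw [hsp]
            field_simp
    have hIb : ‖∫ x : En n, f₁ x‖ ≤ 2 * ρψ * ρφ * (a⁻¹) ^ s' * I := by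
      rw [hsplit]
      refine (norm_integral_le_integral_norm _).trans ?_
      refine (integral_mono_of_nonneg
        (Filter.Eventually.of_forall fun x => norm_nonneg (f₁ x - f₂ x))
        (hIint.const_mul (2 * ρψ * ρφ * (a⁻¹) ^ s'))
        (Filter.Eventually.of_forall hpt)).trans ?_
      rw [MeasureTheory.integral_const_mul]
    calc a ^ (s' + 1) * ‖RT ⇑ψ ⇑φ u b a‖
        = a ^ (s' + 1) * (a⁻¹ * ‖∫ x : En n, f₁ x‖) := by rw [hRT, norm_mul, hnorm_a]
      _ ≤ a ^ (s' + 1) * (a⁻¹ * (2 * ρψ * ρφ * (a⁻¹) ^ s' * I)) := by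
          refine mul_le_mul_of_nonneg_left
            (mul_le_mul_of_nonneg_left hIb (inv_nonneg.mpr ha.le)) (by positivity)
      _ = (2 * ρψ * ρφ * I) * (a ^ (s' + 1) * (a⁻¹ * (a⁻¹) ^ s')) := by ring
      _ = (2 * ρψ * ρφ * I) * (a * a⁻¹) ^ (s' + 1) := by
          rw [mul_pow, pow_succ a⁻¹]
          ring
      _ = 2 * ρψ * ρφ * I := by rw [mul_inv_cancel₀ ha', one_pow, mul_one]
      _ ≤ (2 * I + 2) * ρφ * ρψ := by
          nlinarith [mul_nonneg hρφ0 hρψ0, mul_nonneg (mul_nonneg hρψ0 hρφ0) hI0]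
end
end

section
/- Let ψ ∈ 𝓢(ℝ) and φ ∈ 𝓢(ℝⁿ). Then the function (u,b,a) ↦ R_ψ φ(u,b,a) is infinitely differentiable (smooth) on 𝕊^{n-1}×ℝ×(0,∞), where 𝕊^{n-1} carries its standard smooth manifold structure and the product carries the product smooth structure. -/
open MeasureTheory Metric Filter Set
open scoped Real ComplexConjugate Manifold

noncomputable section

/-- Derivative of `w ↦ χ (g w) • v`. -/
lemma ridge_hasFDerivAt_helper {W F : Type*} [NormedAddCommGroup W] [NormedSpace ℝ W]
    [NormedAddCommGroup F] [NormedSpace ℂ F]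
    (χ : ℝ → ℂ) (c : ℂ) (t : ℝ) (hχ : HasDerivAt χ c t)
    (g : W →L[ℝ] ℝ) (v : F) (w : W) (hw : g w = t) :
    HasFDerivAt (fun w => χ (g w) • v) (c • g.smulRight v) w := by
  have h1 : HasDerivAt (fun s : ℝ => χ s • v) (c • v) t := hχ.smul_const v
  subst hw
  have h2 := h1.hasFDerivAt.comp w g.hasFDerivAt
  convert h2 using 1
  ext h
  simp only [ContinuousLinearMap.coe_comp', Function.comp_apply,
    ContinuousLinearMap.smul_apply, ContinuousLinearMap.smulRight_apply,
    ContinuousLinearMap.one_apply, ContinuousLinearMap.coe_smul', Pi.smul_apply]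
  refine ContinuousLinearMap.ext fun h => ?_
  simp only [ContinuousLinearMap.coe_comp, Function.comp_apply, ContinuousLinearMap.toSpanSingleton_apply, ContinuousLinearMap.smul_apply, ContinuousLinearMap.smulRight_apply]
  rw [smul_comm]

set_option synthInstance.maxHeartbeats 1000000 in
set_option maxHeartbeats 2000000 in
/-- Key smoothness lemma for parametric integrals of the form
`w ↦ ∫ x, χ^{(m)} (g x w) • f x ∂μ`. -/
lemma ridge_key {X : Type} [TopologicalSpace X] [MeasurableSpace X] [OpensMeasurableSpace X]
    [SecondCountableTopology X] {μ : Measure X}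
    {W : Type} [NormedAddCommGroup W] [NormedSpace ℝ W]
    {χ : ℝ → ℂ} (hχ : ContDiff ℝ ((⊤ : ℕ∞) : WithTop ℕ∞) χ)
    (hχb : ∀ k : ℕ, ∃ C : ℝ, ∀ t : ℝ, ‖iteratedDeriv k χ t‖ ≤ C)
    {g : X → (W →L[ℝ] ℝ)} (hg : Continuous g) :
    ∀ (N : ℕ) (F : Type) (_ : NormedAddCommGroup F) (_ : NormedSpace ℂ F)
      (_ : CompleteSpace F) (f : X → F), Continuous f →
      (∀ k : ℕ, Integrable (fun x => ‖g x‖ ^ k * ‖f x‖) μ) → ∀ m : ℕ,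
      ContDiff ℝ (N : ℕ) (fun w : W => ∫ x, iteratedDeriv m χ (g x w) • f x ∂μ) := by
  have hle : ∀ k : ℕ, (k : WithTop ℕ∞) ≤ ((⊤ : ℕ∞) : WithTop ℕ∞) := fun k => by
    exact_mod_cast le_top
  intro N
  induction N with
  | zero =>
    intro F iF1 iF2 iF3 f hf hint m
    rw [Nat.cast_zero, contDiff_zero]
    obtain ⟨C, hC⟩ := hχb m
    have hcont : ∀ w : W, Continuous fun x => iteratedDeriv m χ (g x w) • f x := by
      intro w
      exact (((hχ.continuous_iteratedDeriv m (hle _)).comp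
        (((ContinuousLinearMap.apply ℝ ℝ w).continuous).comp hg))).smul hf
    apply continuous_of_dominated (bound := fun x => C * ‖f x‖)
    · exact fun w => (hcont w).aestronglyMeasurable
    · intro w
      filter_upwards with x
      rw [norm_smul]
      exact mul_le_mul_of_nonneg_right (hC _) (norm_nonneg _)
    · simpa using (hint 0).const_mul C
    · filter_upwards with x
      exact ((hχ.continuous_iteratedDeriv m (hle _)).comp
        ((g x).continuous)).smul continuous_const
  | succ N ih =>
    intro F iF1 iF2 iF3 f hf hint m
    -- the integrand and its derivative
    set f' : X → (W →L[ℝ] F) := fun x => (g x).smulRight (f x) with hf'def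
    have hf'cont : Continuous f' :=
      isBoundedBilinearMap_smulRight.continuous.comp (hg.prodMk hf)
    have hf'norm : ∀ x, ‖f' x‖ = ‖g x‖ * ‖f x‖ := fun x =>
      ContinuousLinearMap.norm_smulRight_apply _ _
    have hint' : ∀ k : ℕ, Integrable (fun x => ‖g x‖ ^ k * ‖f' x‖) μ := by
      intro k
      have := hint (k + 1)
      refine this.congr ?_
      filter_upwards with x
      rw [hf'norm, pow_succ]
      ring
    obtain ⟨C, hC⟩ := hχb (m + 1)
    have hder : ∀ t : ℝ, HasDerivAt (iteratedDeriv m χ)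
        (iteratedDeriv (m + 1) χ t) t := by
      intro t
      have h1 : DifferentiableAt ℝ (iteratedDeriv m χ) t :=
        (hχ.differentiable_iteratedDeriv m
          (by exact_mod_cast lt_top_iff_ne_top.2 (by simp))) t
      have := h1.hasDerivAt
      rwa [← iteratedDeriv_succ] at this
    have hmeas : ∀ w : W, Continuous fun x => iteratedDeriv m χ (g x w) • f x := by
      intro w
      exact ((hχ.continuous_iteratedDeriv m (hle _)).comp
        (((ContinuousLinearMap.apply ℝ ℝ w).continuous).comp hg)).smul hf
    have hmeas' : ∀ w : W,
        Continuous fun x => iteratedDeriv (m + 1) χ (g x w) • f' x := by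
      intro w
      exact ((hχ.continuous_iteratedDeriv (m + 1) (hle _)).comp
        (((ContinuousLinearMap.apply ℝ ℝ w).continuous).comp hg)).smul hf'cont
    have hIf : Integrable (fun x => ‖f x‖) μ := by simpa using hint 0
    have key : ∀ w : W, HasFDerivAt
        (fun w : W => ∫ x, iteratedDeriv m χ (g x w) • f x ∂μ)
        (∫ x, iteratedDeriv (m + 1) χ (g x w) • f' x ∂μ) w := by
      intro w
      apply hasFDerivAt_integral_of_dominated_of_fderiv_le
        (F' := fun (w : W) (x : X) => iteratedDeriv (m + 1) χ (g x w) • f' x)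
        (bound := fun x => C * (‖g x‖ * ‖f x‖)) (s := Metric.ball w 1) (Metric.ball_mem_nhds w one_pos)
      · filter_upwards with w'
        exact (hmeas w').aestronglyMeasurable
      · obtain ⟨C0, hC0⟩ := hχb m
        refine (Integrable.mono' (hIf.const_mul C0)
          (hmeas w).aestronglyMeasurable ?_)
        filter_upwards with x
        rw [norm_smul]
        exact mul_le_mul_of_nonneg_right (hC0 _) (norm_nonneg _)
      · exact (hmeas' w).aestronglyMeasurable
      · filter_upwards with x w' _
        refine le_trans (norm_smul_le (β := W →L[ℝ] F) _ _) ?_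
        rw [hf'norm]
        exact mul_le_mul_of_nonneg_right (hC _) (mul_nonneg (norm_nonneg _) (norm_nonneg _))
      · simpa [pow_one] using (hint 1).const_mul C
      · filter_upwards with x w' _
        exact ridge_hasFDerivAt_helper (iteratedDeriv m χ) _ _ (hder ((g x) w')) (g x) (f x) w' rfl
    rw [show ((N + 1 : ℕ) : WithTop ℕ∞) = (N : WithTop ℕ∞) + 1 by push_cast; rfl]
    rw [contDiff_succ_iff_fderiv]
    refine ⟨fun w => (key w).differentiableAt, by simp, ?_⟩
    have heq : (fderiv ℝ fun w : W => ∫ x, iteratedDeriv m χ (g x w) • f x ∂μ) =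
        fun w => ∫ x, iteratedDeriv (m + 1) χ (g x w) • f' x ∂μ :=
      funext fun w => (key w).fderiv
    rw [heq]
    exact ih (W →L[ℝ] F) inferInstance inferInstance inferInstance f' hf'cont hint' (m + 1)

/-- The affine-linear family `x ↦ ((v,c) ↦ ⟪x,v⟫ + c)`. -/
def ridgeG (n : ℕ) : En n → ((En n × ℝ) →L[ℝ] ℝ) := fun x =>
  ((innerSL ℝ x).comp (ContinuousLinearMap.fst ℝ (En n) ℝ)) +
    ContinuousLinearMap.snd ℝ (En n) ℝ

lemma ridgeG_apply (n : ℕ) (x : En n) (v : En n) (c : ℝ) :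
    ridgeG n x (v, c) = (inner ℝ x v : ℝ) + c := by
  simp [ridgeG]

lemma ridgeG_cont (n : ℕ) : Continuous (ridgeG n) := by
  apply Continuous.add ?_ continuous_const
  exact (((ContinuousLinearMap.compL ℝ (En n × ℝ) (En n) ℝ).flip
    (ContinuousLinearMap.fst ℝ (En n) ℝ)).continuous).comp (innerSL ℝ (E := En n)).continuous

lemma ridgeG_norm (n : ℕ) (x : En n) : ‖ridgeG n x‖ ≤ 1 + ‖x‖ := by
  refine le_trans (norm_add_le _ _) ?_
  have h1 : ‖(innerSL ℝ x).comp (ContinuousLinearMap.fst ℝ (En n) ℝ)‖ ≤ ‖x‖ := by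
    refine le_trans (ContinuousLinearMap.opNorm_comp_le _ _) ?_
    calc ‖innerSL ℝ x‖ * ‖ContinuousLinearMap.fst ℝ (En n) ℝ‖
        ≤ ‖x‖ * 1 := by
          gcongr
          · rw [innerSL_apply_norm]
          · exact ContinuousLinearMap.norm_fst_le ..
      _ = ‖x‖ := mul_one _
  have h2 : ‖ContinuousLinearMap.snd ℝ (En n) ℝ‖ ≤ 1 := ContinuousLinearMap.norm_snd_le ..
  linarith

lemma one_add_pow_le (t : ℝ) (ht : 0 ≤ t) (k : ℕ) :
    (1 + t) ^ k ≤ 2 ^ k * (1 + t ^ k) := by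
  rcases le_total t 1 with h | h
  · have h1 : (1 + t) ^ k ≤ 2 ^ k := by
      apply pow_le_pow_left₀ (by linarith) (by linarith)
    nlinarith [pow_nonneg ht k, pow_nonneg (by norm_num : (0:ℝ) ≤ 2) k]
  · have h1 : (1 + t) ^ k ≤ (2 * t) ^ k := by
      apply pow_le_pow_left₀ (by linarith) (by linarith)
    rw [mul_pow] at h1
    have h2 : (0:ℝ) ≤ 2 ^ k := by positivity
    nlinarith [pow_nonneg ht k]

lemma ridge_int (n : ℕ) (φ : SchwartzMap (En n) ℂ) (k : ℕ) :
    Integrable (fun x => ‖ridgeG n x‖ ^ k * ‖φ x‖) (volume : Measure (En n)) := by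
  have hInt : Integrable (fun x : En n => (2:ℝ) ^ k * (‖φ x‖ + ‖x‖ ^ k * ‖φ x‖)) volume := by
    exact (((φ.integrable (μ := volume)).norm.add (φ.integrable_pow_mul volume k)).const_mul _)
  refine hInt.mono' ?_ ?_
  · exact (((ridgeG_cont n).norm.pow k).mul φ.continuous.norm).aestronglyMeasurable
  · filter_upwards with x
    rw [Real.norm_of_nonneg (by positivity)]
    have h1 : ‖ridgeG n x‖ ^ k ≤ (1 + ‖x‖) ^ k :=
      pow_le_pow_left₀ (norm_nonneg _) (ridgeG_norm n x) k
    have h2 : (1 + ‖x‖) ^ k ≤ 2 ^ k * (1 + ‖x‖ ^ k) := one_add_pow_le _ (norm_nonneg _) k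
    have h3 : ‖ridgeG n x‖ ^ k * ‖φ x‖ ≤ 2 ^ k * (1 + ‖x‖ ^ k) * ‖φ x‖ := by
      exact mul_le_mul_of_nonneg_right (h1.trans h2) (norm_nonneg _)
    calc ‖ridgeG n x‖ ^ k * ‖φ x‖ ≤ 2 ^ k * (1 + ‖x‖ ^ k) * ‖φ x‖ := h3
      _ = 2 ^ k * (‖φ x‖ + ‖x‖ ^ k * ‖φ x‖) := by ring

lemma ridge_chi_smooth (ψ : SchwartzMap ℝ ℂ) :
    ContDiff ℝ ((⊤ : ℕ∞) : WithTop ℕ∞) (fun s : ℝ => (starRingEnd ℂ) (ψ s)) :=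
  (Complex.conjLIE : ℂ ≃ₗᵢ[ℝ] ℂ).contDiff.comp (ψ.smooth ⊤)

lemma ridge_chi_bound (ψ : SchwartzMap ℝ ℂ) (k : ℕ) :
    ∃ C : ℝ, ∀ t : ℝ, ‖iteratedDeriv k (fun s : ℝ => (starRingEnd ℂ) (ψ s)) t‖ ≤ C := by
  obtain ⟨C, -, hC⟩ := ψ.decay 0 k
  refine ⟨C, fun t => ?_⟩
  have h1 : (fun s : ℝ => (starRingEnd ℂ) (ψ s)) = (Complex.conjLIE : ℂ ≃ₗᵢ[ℝ] ℂ) ∘ ψ := rfl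
  rw [← norm_iteratedFDeriv_eq_norm_iteratedDeriv, h1,
    LinearIsometryEquiv.norm_iteratedFDeriv_comp_left]
  simpa using hC t

lemma ridge_G_smooth (n : ℕ) (ψ : SchwartzMap ℝ ℂ) (φ : SchwartzMap (En n) ℂ) :
    ContDiff ℝ ((⊤ : ℕ∞) : WithTop ℕ∞)
      (fun w : En n × ℝ => ∫ x : En n, (starRingEnd ℂ) (ψ (ridgeG n x w)) • φ x) := by
  rw [contDiff_infty]
  intro N
  have := ridge_key (ridge_chi_smooth ψ) (ridge_chi_bound ψ) (ridgeG_cont n) N ℂ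
    inferInstance inferInstance inferInstance (fun x => φ x) φ.continuous
    (fun k => ridge_int n φ k) 0
  simpa [iteratedDeriv_zero] using this


/-- for ψ ∈ 𝓢(ℝ) and φ ∈ 𝓢(ℝⁿ) (with n = m+1 ≥ 2), the ridgelet transform
(u,b,a) ↦ R_ψφ(u,b,a) is smooth on the manifold 𝕊^{n-1}×ℝ×(0,∞). -/
theorem ridgelet_transform_smooth
    (m : ℕ) (hm : 2 ≤ m + 1)
    [Fact (Module.finrank ℝ (En (m + 1)) = m + 1)]
    (ψ : SchwartzMap ℝ ℂ) (φ : SchwartzMap (En (m + 1)) ℂ) :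
    ContMDiffOn ((𝓡 m).prod (𝓘(ℝ, ℝ × ℝ))) 𝓘(ℝ, ℂ) (⊤ : ℕ∞)
      (fun q : Sph (m + 1) × ℝ × ℝ => RT ⇑ψ ⇑φ q.1 q.2.1 q.2.2)
      (univ ×ˢ univ ×ˢ Ioi (0:ℝ)) := by
  have hG : ContDiff ℝ ((⊤ : ℕ∞) : WithTop ℕ∞)
      (fun w : En (m+1) × ℝ => ∫ x : En (m+1), (starRingEnd ℂ) (ψ (ridgeG (m+1) x w)) • φ x) :=
    ridge_G_smooth (m+1) ψ φ
  have hanz : ∀ p : En (m+1) × ℝ × ℝ, p ∈ (univ ×ˢ univ ×ˢ Ioi (0:ℝ) :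
      Set (En (m+1) × ℝ × ℝ)) → p.2.2 ≠ 0 := fun p hp => ne_of_gt hp.2.2
  have hinv : ContDiffOn ℝ ((⊤ : ℕ∞) : WithTop ℕ∞)
      (fun p : En (m+1) × ℝ × ℝ => (p.2.2)⁻¹) (univ ×ˢ univ ×ˢ Ioi (0:ℝ)) :=
    ContDiffOn.inv ((contDiff_snd.comp contDiff_snd).contDiffOn) hanz
  have hT : ContDiffOn ℝ ((⊤ : ℕ∞) : WithTop ℕ∞)
      (fun p : En (m+1) × ℝ × ℝ => ((p.2.2)⁻¹ • p.1, -(p.2.1 * (p.2.2)⁻¹)))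
      (univ ×ˢ univ ×ˢ Ioi (0:ℝ)) :=
    (hinv.smul contDiff_fst.contDiffOn).prodMk
      (((contDiff_fst.comp contDiff_snd).contDiffOn.mul hinv).neg)
  have hc : ContDiffOn ℝ ((⊤ : ℕ∞) : WithTop ℕ∞)
      (fun p : En (m+1) × ℝ × ℝ => ((p.2.2 : ℝ) : ℂ)⁻¹) (univ ×ˢ univ ×ˢ Ioi (0:ℝ)) := by
    apply ContDiffOn.inv
    · exact (Complex.ofRealCLM.contDiff.comp (contDiff_snd.comp contDiff_snd)).contDiffOn
    · intro p hp
      simpa using hanz p hp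
  have hB : ContDiffOn ℝ ((⊤ : ℕ∞) : WithTop ℕ∞)
      (fun p : En (m+1) × ℝ × ℝ => ((p.2.2 : ℝ) : ℂ)⁻¹ *
        ∫ x : En (m+1), (starRingEnd ℂ)
          (ψ (ridgeG (m+1) x ((p.2.2)⁻¹ • p.1, -(p.2.1 * (p.2.2)⁻¹)))) • φ x)
      (univ ×ˢ univ ×ˢ Ioi (0:ℝ)) :=
    hc.mul (hG.comp_contDiffOn hT)
  have h1 : ContMDiff ((𝓡 m).prod (𝓘(ℝ, ℝ × ℝ))) 𝓘(ℝ, En (m+1)) (⊤ : ℕ∞)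
      (fun q : Sph (m+1) × ℝ × ℝ => (q.1 : En (m+1))) :=
    by
    have hfst : ContMDiff ((𝓡 m).prod (𝓘(ℝ, ℝ × ℝ))) (𝓡 m) (⊤ : ℕ∞)
        (Prod.fst : Sph (m+1) × ℝ × ℝ → Sph (m+1)) := contMDiff_fst
    exact ContMDiff.comp (contMDiff_coe_sphere (n := m)) hfst
  have h2 : ContMDiff ((𝓡 m).prod (𝓘(ℝ, ℝ × ℝ))) 𝓘(ℝ, ℝ × ℝ) (⊤ : ℕ∞)
      (fun q : Sph (m+1) × ℝ × ℝ => q.2) := contMDiff_snd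
  have hι' : ContMDiff ((𝓡 m).prod (𝓘(ℝ, ℝ × ℝ))) 𝓘(ℝ, En (m+1) × ℝ × ℝ) (⊤ : ℕ∞)
      (fun q : Sph (m+1) × ℝ × ℝ => ((q.1 : En (m+1)), q.2)) :=
    ContMDiff.prodMk_space h1 h2
  have hmaps : MapsTo (fun q : Sph (m+1) × ℝ × ℝ => ((q.1 : En (m+1)), q.2))
      (univ ×ˢ univ ×ˢ Ioi (0:ℝ)) (univ ×ˢ univ ×ˢ Ioi (0:ℝ)) := by
    intro q hq
    exact ⟨mem_univ _, mem_univ _, hq.2.2⟩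
  have hfinal : ContMDiffOn ((𝓡 m).prod (𝓘(ℝ, ℝ × ℝ))) 𝓘(ℝ, ℂ) (⊤ : ℕ∞)
      ((fun p : En (m+1) × ℝ × ℝ => ((p.2.2 : ℝ) : ℂ)⁻¹ *
        ∫ x : En (m+1), (starRingEnd ℂ)
          (ψ (ridgeG (m+1) x ((p.2.2)⁻¹ • p.1, -(p.2.1 * (p.2.2)⁻¹)))) • φ x) ∘
        (fun q : Sph (m+1) × ℝ × ℝ => ((q.1 : En (m+1)), q.2)))
      (univ ×ˢ univ ×ˢ Ioi (0:ℝ)) := by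
    intro q hq
    have hf : ContMDiffWithinAt ((𝓡 m).prod (𝓘(ℝ, ℝ × ℝ))) 𝓘(ℝ, En (m+1) × ℝ × ℝ) (⊤ : ℕ∞)
        (fun q : Sph (m+1) × ℝ × ℝ => ((q.1 : En (m+1)), q.2))
        (univ ×ˢ univ ×ˢ Ioi (0:ℝ)) q := (hι' q).contMDiffWithinAt
    have hg : ContDiffWithinAt ℝ ((⊤ : ℕ∞) : WithTop ℕ∞)
        (fun p : En (m+1) × ℝ × ℝ => ((p.2.2 : ℝ) : ℂ)⁻¹ *
          ∫ x : En (m+1), (starRingEnd ℂ)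
            (ψ (ridgeG (m+1) x ((p.2.2)⁻¹ • p.1, -(p.2.1 * (p.2.2)⁻¹)))) • φ x)
        (univ ×ˢ univ ×ˢ Ioi (0:ℝ))
        ((fun q : Sph (m+1) × ℝ × ℝ => ((q.1 : En (m+1)), q.2)) q) := hB _ (hmaps hq)
    have hgm : ContMDiffWithinAt 𝓘(ℝ, En (m+1) × ℝ × ℝ) 𝓘(ℝ, ℂ) (⊤ : ℕ∞)
        (fun p : En (m+1) × ℝ × ℝ => ((p.2.2 : ℝ) : ℂ)⁻¹ *
          ∫ x : En (m+1), (starRingEnd ℂ)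
            (ψ (ridgeG (m+1) x ((p.2.2)⁻¹ • p.1, -(p.2.1 * (p.2.2)⁻¹)))) • φ x)
        (univ ×ˢ univ ×ˢ Ioi (0:ℝ))
        ((fun q : Sph (m+1) × ℝ × ℝ => ((q.1 : En (m+1)), q.2)) q) := hg.contMDiffWithinAt
    exact ContMDiffWithinAt.comp q hgm hf hmaps
  refine hfinal.congr ?_
  rintro ⟨u, b, a⟩ hq
  have ha : 0 < a := hq.2.2
  have ha' : (a : ℝ) ≠ 0 := ne_of_gt ha
  simp only [Function.comp_apply]
  simp only [RT, ridgelet]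
  rw [← smul_eq_mul, ← integral_smul]
  refine integral_congr_ae (Filter.Eventually.of_forall fun x => ?_)
  simp only [ridgeG_apply, real_inner_smul_right, map_mul, map_inv₀, Complex.conj_ofReal,
    smul_eq_mul]
  rw [show a⁻¹ * (inner ℝ x (u : En (m+1)) : ℝ) + -(b * a⁻¹) =
      ((inner ℝ x (u : En (m+1)) : ℝ) - b) / a from by field_simp; ring]
  ring
end
end

section
/- Let f ∈ 𝓢(ℝⁿ), ψ ∈ 𝓢(ℝ), and let α be a multi-index. Then for every (u,b,a) ∈ 𝕊^{n-1}×ℝ×(0,∞), the ridgelet transform intertwines differentiation as follows: R_ψ(∂^α f)(u,b,a) = (−1)^{|α|} u^α a^{−|α|} R_{ψ^{(|α|)}} f(u,b,a), where ψ^{(|α|)} is the |α|-th derivative of ψ and u^α = u₁^{α₁}⋯u_n^{α_n}. -/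
open MeasureTheory Metric Filter Set
open scoped Real ComplexConjugate Manifold

noncomputable section

/-- Partial derivative in the i-th coordinate direction. -/
def pderiv1 {n : ℕ} (i : Fin n) (f : En n → ℂ) : En n → ℂ :=
  fun x => fderiv ℝ f x (EuclideanSpace.single i (1 : ℝ))

/-- Multi-index partial derivative ∂^α = ∂₁^{α₁} ⋯ ∂ₙ^{αₙ}. -/
def mderiv {n : ℕ} (α : Fin n → ℕ) (f : En n → ℂ) : En n → ℂ :=
  (List.finRange n).foldr (fun i g => (pderiv1 i)^[α i] g) f

lemma schwartz_bdd {E : Type*} [NormedAddCommGroup E] [NormedSpace ℝ E]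
    (ψ : SchwartzMap E ℂ) : ∃ C : ℝ, ∀ t, ‖ψ t‖ ≤ C := by
  obtain ⟨C, -, hC⟩ := ψ.decay 0 0
  exact ⟨C, fun t => by simpa using hC t⟩

lemma RT_pderiv1 {n : ℕ} (f : SchwartzMap (En n) ℂ) (ψ : SchwartzMap ℝ ℂ) (i : Fin n)
    (u : Sph n) (b a : ℝ) (ha : 0 < a) :
    RT ⇑ψ (pderiv1 i ⇑f) u b a
      = (-1 : ℂ) * (((u : En n) i : ℝ) : ℂ) * ((a : ℝ) : ℂ)⁻¹ *
        RT ⇑(SchwartzMap.derivCLM ℝ ℂ ψ) ⇑f u b a := by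
  classical
  set v : En n := EuclideanSpace.single i (1 : ℝ) with hv
  set s : En n → ℝ := fun x => ((inner ℝ x (u : En n) : ℝ) - b) / a with hsdef
  set g : En n → ℂ := fun x => conj (ridgelet (⇑ψ) u b a x) with hgdef
  -- derivative of s
  have hs : ∀ x : En n, HasFDerivAt s ((a⁻¹ : ℝ) • (innerSL ℝ (u : En n))) x := by
    intro x
    have h1 : HasFDerivAt (fun y : En n => (inner ℝ y (u : En n) : ℝ))
        (innerSL ℝ (u : En n)) x := by
      have he : (fun y : En n => (inner ℝ y (u : En n) : ℝ))
          = fun y => (innerSL ℝ (u : En n)) y := by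
        funext y; rw [innerSL_apply_apply, real_inner_comm]
      rw [he]; exact (innerSL ℝ (u : En n)).hasFDerivAt
    have h2 := (h1.sub_const b).const_smul (a⁻¹ : ℝ)
    have he2 : s = fun y => (a⁻¹ : ℝ) • ((inner ℝ y (u : En n) : ℝ) - b) := by
      funext y; simp [hsdef, smul_eq_mul, div_eq_inv_mul]
    rw [he2]; exact h2
  -- derivative of g
  have hφ : ∀ t : ℝ, HasDerivAt (fun t => conj (ψ t)) (conj (deriv (⇑ψ) t)) t := by
    intro t
    exact (Complex.conjCLE.toContinuousLinearMap.hasFDerivAt).comp_hasDerivAt t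
      (ψ.differentiableAt.hasDerivAt)
  have hgd : ∀ x : En n, HasFDerivAt g
      ((a : ℂ)⁻¹ • ((ContinuousLinearMap.smulRight (1 : ℝ →L[ℝ] ℝ)
        (conj (deriv (⇑ψ) (s x)))).comp ((a⁻¹ : ℝ) • (innerSL ℝ (u : En n))))) x := by
    intro x
    have hcomp : HasFDerivAt (fun y => conj (ψ (s y)))
        ((ContinuousLinearMap.smulRight (1 : ℝ →L[ℝ] ℝ)
          (conj (deriv (⇑ψ) (s x)))).comp ((a⁻¹ : ℝ) • (innerSL ℝ (u : En n)))) x :=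
      ((hφ (s x)).hasFDerivAt).comp x (hs x)
    have he : g = fun y => (a : ℂ)⁻¹ * conj (ψ (s y)) := by
      funext y
      simp [hgdef, ridgelet, hsdef, map_mul, map_inv₀, Complex.conj_ofReal]
    rw [he]
    exact hcomp.const_mul _
  -- value of the derivative of g in direction v
  set grid : En n → ℂ := fun x => conj (ridgelet (⇑(SchwartzMap.derivCLM ℝ ℂ ψ)) u b a x)
    with hgriddef
  set c : ℂ := (((u : En n) i : ℝ) : ℂ) * ((a : ℝ) : ℂ)⁻¹ with hcdef
  have hgv : ∀ x : En n, fderiv ℝ g x v = c * grid x := by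
    intro x
    rw [(hgd x).fderiv]
    simp only [ContinuousLinearMap.coe_smul', Pi.smul_apply, ContinuousLinearMap.coe_comp',
      Function.comp_apply, ContinuousLinearMap.smulRight_apply, ContinuousLinearMap.one_apply,
      innerSL_apply_apply, hv, EuclideanSpace.inner_single_right, conj_trivial, one_mul,
      hgriddef, ridgelet, hcdef, SchwartzMap.derivCLM_apply, map_mul, map_inv₀,
      Complex.conj_ofReal, Complex.real_smul, smul_eq_mul, hsdef]
    push_cast
    ring
  -- boundedness and continuity of conjugated ridgelets
  have hcont : ∀ η : SchwartzMap ℝ ℂ,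
      Continuous (fun x : En n => conj (ridgelet (⇑η) u b a x)) := by
    intro η
    apply Complex.continuous_conj.comp
    exact continuous_const.mul (η.continuous.comp
      (((continuous_id.inner continuous_const).sub continuous_const).div_const a))
  have hbdd : ∀ η : SchwartzMap ℝ ℂ,
      ∃ C : ℝ, ∀ x : En n, ‖conj (ridgelet (⇑η) u b a x)‖ ≤ C := by
    intro η
    obtain ⟨C, hC⟩ := schwartz_bdd η
    refine ⟨|a|⁻¹ * C, fun x => ?_⟩
    have : ‖conj (ridgelet (⇑η) u b a x)‖ = |a|⁻¹ * ‖η (((inner ℝ x (u : En n) : ℝ) - b) / a)‖ := by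
      simp [ridgelet, norm_mul]
    rw [this]
    exact mul_le_mul_of_nonneg_left (hC _) (by positivity)
  have hmul : ∀ (φ : SchwartzMap (En n) ℂ) (η : SchwartzMap ℝ ℂ),
      Integrable (fun x => φ x * conj (ridgelet (⇑η) u b a x)) volume := by
    intro φ η
    obtain ⟨C, hC⟩ := hbdd η
    have := Integrable.bdd_mul (φ.integrable (μ := volume))
      ((hcont η).aestronglyMeasurable) (Filter.Eventually.of_forall hC)
    simpa [mul_comm] using this
  -- the three integrability assumptions
  have hfg : Integrable (fun x => f x * g x) volume := hmul f ψ
  have hf'g : Integrable (fun x => fderiv ℝ (⇑f) x v * g x) volume := by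
    have he : (fun x => fderiv ℝ (⇑f) x v * g x)
        = fun x => (LineDeriv.lineDerivOp v f) x * g x := by
      funext x; rw [SchwartzMap.lineDerivOp_apply_eq_fderiv]
    rw [he]; exact hmul _ ψ
  have hfg' : Integrable (fun x => f x * fderiv ℝ g x v) volume := by
    have he : (fun x => f x * fderiv ℝ g x v) = fun x => c * (f x * grid x) := by
      funext x; rw [hgv x]; ring
    rw [he]
    exact (hmul f _).const_mul c
  have key := integral_mul_fderiv_eq_neg_fderiv_mul_of_integrable (μ := volume)
    (f := ⇑f) (g := g) (v := v) hf'g hfg' hfg (fun x _ => f.differentiableAt)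
    (fun x _ => (hgd x).differentiableAt)
  have key2 : ∫ x : En n, fderiv ℝ (⇑f) x v * g x = -∫ x : En n, f x * fderiv ℝ g x v := by
    rw [key, neg_neg]
  have lhs : RT ⇑ψ (pderiv1 i ⇑f) u b a = ∫ x : En n, fderiv ℝ (⇑f) x v * g x := rfl
  rw [lhs, key2]
  have he : (fun x : En n => f x * fderiv ℝ g x v) = fun x => c * (f x * grid x) := by
    funext x; rw [hgv x]; ring
  rw [he, integral_const_mul]
  have : RT ⇑(SchwartzMap.derivCLM ℝ ℂ ψ) (⇑f) u b a = ∫ x : En n, f x * grid x := rfl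
  rw [this]
  ring

def pdS {n : ℕ} (i : Fin n) : SchwartzMap (En n) ℂ → SchwartzMap (En n) ℂ :=
  fun g => LineDeriv.lineDerivOp (EuclideanSpace.single i (1 : ℝ)) g

def dS : SchwartzMap ℝ ℂ → SchwartzMap ℝ ℂ := fun η => SchwartzMap.derivCLM ℝ ℂ η

lemma coe_pdS_iter {n : ℕ} (i : Fin n) (k : ℕ) (g : SchwartzMap (En n) ℂ) :
    ⇑((pdS i)^[k] g) = (pderiv1 i)^[k] ⇑g := by
  induction k generalizing g with
  | zero => rfl
  | succ k ih =>
    rw [Function.iterate_succ_apply', Function.iterate_succ_apply']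
    have : ⇑(pdS i ((pdS i)^[k] g)) = pderiv1 i ⇑((pdS i)^[k] g) := by
      funext x
      exact SchwartzMap.lineDerivOp_apply_eq_fderiv _ _ _
    rw [this, ih]

lemma coe_dS_iter (k : ℕ) (η : SchwartzMap ℝ ℂ) : ⇑(dS^[k] η) = deriv^[k] ⇑η := by
  induction k generalizing η with
  | zero => rfl
  | succ k ih =>
    rw [Function.iterate_succ_apply', Function.iterate_succ_apply']
    have : ⇑(dS (dS^[k] η)) = deriv ⇑(dS^[k] η) := by
      funext x
      exact SchwartzMap.derivCLM_apply ℝ _ _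
    rw [this, ih]

lemma RT_pdS_iter {n : ℕ} (f : SchwartzMap (En n) ℂ) (ψ : SchwartzMap ℝ ℂ) (i : Fin n) (k : ℕ)
    (u : Sph n) (b a : ℝ) (ha : 0 < a) :
    RT ⇑ψ ⇑((pdS i)^[k] f) u b a
      = (-1 : ℂ) ^ k * (((u : En n) i : ℝ) : ℂ) ^ k * ((a ^ k : ℝ) : ℂ)⁻¹ *
        RT ⇑(dS^[k] ψ) ⇑f u b a := by
  induction k generalizing ψ with
  | zero => simp
  | succ k ih =>
    rw [Function.iterate_succ_apply']
    have h1 : ⇑(pdS i ((pdS i)^[k] f)) = pderiv1 i ⇑((pdS i)^[k] f) := by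
      funext x; exact SchwartzMap.lineDerivOp_apply_eq_fderiv _ _ _
    rw [h1, RT_pderiv1 ((pdS i)^[k] f) ψ i u b a ha, ih (SchwartzMap.derivCLM ℝ ℂ ψ)]
    have h2 : dS^[k] (SchwartzMap.derivCLM ℝ ℂ ψ) = dS^[k + 1] ψ :=
      (Function.iterate_succ_apply dS k ψ).symm
    rw [h2]
    push_cast [pow_succ]
    ring

lemma RT_foldr {n : ℕ} (α : Fin n → ℕ) (u : Sph n) (b a : ℝ) (ha : 0 < a) :
    ∀ (l : List (Fin n)) (ψ : SchwartzMap ℝ ℂ) (f : SchwartzMap (En n) ℂ),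
    RT ⇑ψ ⇑(l.foldr (fun i g => (pdS i)^[α i] g) f) u b a
      = (-1 : ℂ) ^ ((l.map α).sum) *
          ((l.map (fun i => (((u : En n) i : ℝ) : ℂ) ^ α i)).prod) *
          ((a ^ ((l.map α).sum) : ℝ) : ℂ)⁻¹ *
          RT ⇑(dS^[(l.map α).sum] ψ) ⇑f u b a := by
  intro l
  induction l with
  | nil => intro ψ f; simp
  | cons i t ih =>
    intro ψ f
    rw [List.foldr_cons,
      RT_pdS_iter (t.foldr (fun i g => (pdS i)^[α i] g) f) ψ i (α i) u b a ha,
      ih (dS^[α i] ψ) f, ← Function.iterate_add_apply]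
    simp only [List.map_cons, List.sum_cons, List.prod_cons]
    rw [Nat.add_comm ((t.map α).sum) (α i)]
    push_cast [pow_add]
    ring

lemma coe_foldr {n : ℕ} (α : Fin n → ℕ) :
    ∀ (l : List (Fin n)) (f : SchwartzMap (En n) ℂ),
    ⇑(l.foldr (fun i g => (pdS i)^[α i] g) f)
      = l.foldr (fun i g => (pderiv1 i)^[α i] g) ⇑f := by
  intro l
  induction l with
  | nil => intro f; rfl
  | cons i t ih =>
    intro f
    rw [List.foldr_cons, List.foldr_cons, coe_pdS_iter, ih]

/-- the ridgelet transform intertwines differentiation: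
R_ψ(∂^α f)(u,b,a) = (−1)^{|α|} u^α a^{−|α|} R_{ψ^{(|α|)}}f(u,b,a). -/
theorem ridgelet_of_derivative
    (n : ℕ) (hn : 2 ≤ n) (f : SchwartzMap (En n) ℂ) (ψ : SchwartzMap ℝ ℂ)
    (α : Fin n → ℕ) :
    ∀ (u : Sph n) (b a : ℝ), 0 < a →
      RT ⇑ψ (mderiv α ⇑f) u b a =
        (-1 : ℂ) ^ (∑ i, α i) * (∏ i, (((u : En n) i : ℝ) : ℂ) ^ α i) *
          ((a ^ (∑ i, α i) : ℝ) : ℂ)⁻¹ *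
          RT (iteratedDeriv (∑ i, α i) ⇑ψ) ⇑f u b a := by
  intro u b a ha
  have h1 : mderiv α ⇑f
      = ⇑((List.finRange n).foldr (fun i g => (pdS i)^[α i] g) f) :=
    (coe_foldr α (List.finRange n) f).symm
  rw [h1, RT_foldr α u b a ha (List.finRange n) ψ f,
    iteratedDeriv_eq_iterate, ← coe_dS_iter, Fin.sum_univ_def, Fin.prod_univ_def]
end
end
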